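/- arXiv:1604.02473 — 7 statements merged into one kernel-verified Lean document; each statement's English description precedes it below -/
import Mathlib

section
/- Every infinite crowded subset of ℚ (with the subspace topology from ℝ) contains an infinite perfect subset, i.e., a subset of ℚ that is closed in ℚ and crowded. -/
namespace StmtAux

/-- The hypothesis form of crowdedness we use. -/
def Crw (S : Set ℚ) : Prop :=
  ∀ y ∈ S, ∀ ε : ℝ, 0 < ε → ∃ y', y' ∈ S ∧ y' ≠ y ∧ |(y' : ℝ) - (y : ℝ)| < ε

theorem exists_nxt {S : Set ℚ} (hS : Crw S) {y : ℚ} (hy : y ∈ S) {r : ℝ} (hr : 0 < r)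
    (n k : ℕ) :
    ∃ p : ℚ × ℝ, p.1 ∈ S ∧ 0 < p.2 ∧ p.1 ≠ y ∧
      |(p.1 : ℝ) - (y : ℝ)| + p.2 ≤ min r (1 / (n + 1 : ℝ)) ∧
      p.2 ≤ (2 * (p.1.den : ℝ))⁻¹ ^ (k + 2) := by
  have hε : 0 < min r (1 / (n + 1 : ℝ)) / 2 :=
    div_pos (lt_min hr (by positivity)) two_pos
  obtain ⟨y', hy'S, hne, hd⟩ := hS y hy _ hε
  have hden : (0 : ℝ) < (y'.den : ℝ) := by exact_mod_cast y'.den_pos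
  refine ⟨(y', min (min r (1 / (n + 1 : ℝ)) / 2) ((2 * (y'.den : ℝ))⁻¹ ^ (k + 2))),
    hy'S, ?_, hne, ?_, min_le_right _ _⟩
  · exact lt_min hε (by positivity)
  · calc |(y' : ℝ) - (y : ℝ)| + min (min r (1 / (n + 1 : ℝ)) / 2) _
        ≤ min r (1 / (n + 1 : ℝ)) / 2 + min r (1 / (n + 1 : ℝ)) / 2 :=
          add_le_add hd.le (min_le_left _ _)
      _ = min r (1 / (n + 1 : ℝ)) := add_halves _

variable {S : Set ℚ} (hS : Crw S) {y0 : ℚ} (hy0 : y0 ∈ S)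

noncomputable def node : List ℕ → {p : ℚ × ℝ // p.1 ∈ S ∧ 0 < p.2}
  | [] => ⟨(y0, (2 * (y0.den : ℝ))⁻¹), hy0, by
      have : (0 : ℝ) < (y0.den : ℝ) := by exact_mod_cast y0.den_pos
      positivity⟩
  | n :: σ =>
    let q := node σ
    let e := exists_nxt hS q.2.1 q.2.2 n σ.length
    ⟨e.choose, e.choose_spec.1, e.choose_spec.2.1⟩

/-- The point of a node. -/
noncomputable def X (σ : List ℕ) : ℚ := (node hS hy0 σ).1.1

/-- The radius of a node. -/
noncomputable def R (σ : List ℕ) : ℝ := (node hS hy0 σ).1.2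

theorem R_pos (σ : List ℕ) : 0 < R hS hy0 σ := (node hS hy0 σ).2.2

theorem X_mem (σ : List ℕ) : X hS hy0 σ ∈ S := (node hS hy0 σ).2.1

theorem node_cons (n : ℕ) (σ : List ℕ) :
    X hS hy0 (n :: σ) ≠ X hS hy0 σ ∧
    |(X hS hy0 (n :: σ) : ℝ) - (X hS hy0 σ : ℝ)| + R hS hy0 (n :: σ)
      ≤ min (R hS hy0 σ) (1 / (n + 1 : ℝ)) ∧
    R hS hy0 (n :: σ) ≤ (2 * ((X hS hy0 (n :: σ)).den : ℝ))⁻¹ ^ (σ.length + 2) := by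
  have h := (exists_nxt hS (node hS hy0 σ).2.1 (node hS hy0 σ).2.2 n σ.length).choose_spec
  exact ⟨h.2.2.1, h.2.2.2.1, h.2.2.2.2⟩

theorem R_liouville (σ : List ℕ) :
    R hS hy0 σ ≤ (2 * ((X hS hy0 σ).den : ℝ))⁻¹ ^ (σ.length + 1) := by
  cases σ with
  | nil => simp [R, X, node, pow_one]
  | cons n σ =>
    have h := (node_cons hS hy0 n σ).2.2
    simpa [List.length_cons] using h

end StmtAux

namespace StmtAux

variable {S : Set ℚ} (hS : Crw S) {y0 : ℚ} (hy0 : y0 ∈ S)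

theorem nest (l : List ℕ) : ∀ σ : List ℕ,
    |(X hS hy0 (l ++ σ) : ℝ) - (X hS hy0 σ : ℝ)| + R hS hy0 (l ++ σ) ≤ R hS hy0 σ := by
  induction l using List.reverseRecOn with
  | nil =>
    intro σ
    simp [le_of_eq, R_pos]
  | append_singleton l n ih =>
    intro σ
    have h1 := ih (n :: σ)
    have h2 := (node_cons hS hy0 n σ).2.1
    have h3 : (l ++ [n]) ++ σ = l ++ (n :: σ) := by simp
    rw [h3]
    have tri := abs_sub_le (X hS hy0 (l ++ (n :: σ)) : ℝ) (X hS hy0 (n :: σ) : ℝ)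
      (X hS hy0 σ : ℝ)
    have h4 : min (R hS hy0 σ) (1 / (n + 1 : ℝ)) ≤ R hS hy0 σ := min_le_left _ _
    linarith

/-- The set of real points of all descendants of `σ`. -/
def Aset (σ : List ℕ) : Set ℝ := {v | ∃ l : List ℕ, v = (X hS hy0 (l ++ σ) : ℝ)}

theorem Aset_ball {σ : List ℕ} {v : ℝ} (hv : v ∈ Aset hS hy0 σ) :
    |v - (X hS hy0 σ : ℝ)| ≤ R hS hy0 σ := by
  obtain ⟨l, rfl⟩ := hv
  have := nest hS hy0 l σ
  have := R_pos hS hy0 (l ++ σ)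
  linarith

theorem closure_Aset_ball {σ : List ℕ} {z : ℝ} (hz : z ∈ closure (Aset hS hy0 σ)) :
    |z - (X hS hy0 σ : ℝ)| ≤ R hS hy0 σ := by
  have hsub : closure (Aset hS hy0 σ) ⊆ Metric.closedBall (X hS hy0 σ : ℝ) (R hS hy0 σ) := by
    refine closure_minimal (fun v hv => ?_) Metric.isClosed_closedBall
    rw [Metric.mem_closedBall, Real.dist_eq]
    exact Aset_ball hS hy0 hv
  have := hsub hz
  rwa [Metric.mem_closedBall, Real.dist_eq] at this

end StmtAux

namespace StmtAux

variable {S : Set ℚ} (hS : Crw S) {y0 : ℚ} (hy0 : y0 ∈ S)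

theorem step {z : ℚ} (hzP : ∀ τ : List ℕ, X hS hy0 τ ≠ z) {σ : List ℕ}
    (hcl : (z : ℝ) ∈ closure (Aset hS hy0 σ)) :
    ∃ n : ℕ, (z : ℝ) ∈ closure (Aset hS hy0 (n :: σ)) := by
  by_contra h'
  push_neg at h'
  have hne : (z : ℝ) ≠ (X hS hy0 σ : ℝ) := by
    intro h; exact hzP σ (by exact_mod_cast h.symm)
  have key : ∀ η : ℝ, 0 < η → |(z : ℝ) - (X hS hy0 σ : ℝ)| < η := by
    intro η hη
    obtain ⟨N, hN⟩ := exists_nat_one_div_lt (show (0:ℝ) < η/2 by linarith)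
    have he : ∀ n : ℕ, ∃ e : ℝ, 0 < e ∧ ∀ v ∈ Aset hS hy0 (n :: σ), e ≤ |(z:ℝ) - v| := by
      intro n
      have hn := h' n
      rw [Metric.mem_closure_iff] at hn
      push_neg at hn
      obtain ⟨e, he0, h2⟩ := hn
      exact ⟨e, he0, fun v hv => by simpa [Real.dist_eq] using h2 v hv⟩
    choose e epos esep using he
    set E : ℝ := min (η/2) ((Finset.range (N+1)).inf' ⟨0, by simp⟩ e) with hE
    have hEpos : 0 < E := lt_min (by linarith) (by
      exact (Finset.lt_inf'_iff _).2 fun b _ => epos b)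
    have hcl' := hcl
    rw [Metric.mem_closure_iff] at hcl'
    obtain ⟨v, hv, hdv⟩ := hcl' E hEpos
    rw [Real.dist_eq] at hdv
    obtain ⟨l, rfl⟩ := hv
    rcases List.eq_nil_or_concat l with rfl | ⟨l', n, rfl⟩
    · have hle : E ≤ η := le_trans (min_le_left _ _) (by linarith)
      have := lt_of_lt_of_le hdv hle
      simpa using this
    · have hmem : (X hS hy0 (l'.concat n ++ σ) : ℝ) ∈ Aset hS hy0 (n :: σ) :=
        ⟨l', by simp⟩
      by_cases hn : n < N + 1
      · have h1 : E ≤ e n :=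
          le_trans (min_le_right _ _) (Finset.inf'_le _ (Finset.mem_range.mpr hn))
        have h2 := esep n _ hmem
        linarith
      · have hball := Aset_ball hS hy0 hmem
        have hcons := (node_cons hS hy0 n σ).2.1
        have hr := R_pos hS hy0 (n :: σ)
        have tri1 := abs_sub_le (z:ℝ) (X hS hy0 (l'.concat n ++ σ) : ℝ) (X hS hy0 σ : ℝ)
        have tri2 := abs_sub_le (X hS hy0 (l'.concat n ++ σ) : ℝ) (X hS hy0 (n::σ) : ℝ)
          (X hS hy0 σ : ℝ)
        have hmin : min (R hS hy0 σ) (1/(n+1:ℝ)) ≤ 1/(n+1:ℝ) := min_le_right _ _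
        have hfrac : (1:ℝ)/(n+1) ≤ 1/(N+1) := by
          apply one_div_le_one_div_of_le (by positivity)
          have : (N:ℝ) ≤ n := by exact_mod_cast Nat.le_of_not_lt (by omega)
          linarith
        have hE2 : E ≤ η/2 := min_le_left _ _
        linarith
  have h0 : ¬ (0 < |(z:ℝ) - (X hS hy0 σ : ℝ)|) := fun h => lt_irrefl _ (key _ h)
  have h1 : |(z:ℝ) - (X hS hy0 σ : ℝ)| = 0 := le_antisymm (not_lt.mp h0) (abs_nonneg _)
  exact hne (sub_eq_zero.mp (abs_eq_zero.mp h1))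

end StmtAux

/-- A subset of a topological space is *crowded* if it has no isolated points. -/
def CrowdedIn {α : Type*} [TopologicalSpace α] (S : Set α) : Prop :=
  ∀ x ∈ S, x ∈ closure (S \ {x})

/-- Every infinite crowded subset of ℚ contains an infinite perfect
(closed in ℚ and crowded) subset. -/
theorem stmt1 (S : Set ℚ) (hinf : S.Infinite) (hcr : CrowdedIn S) :
    ∃ P : Set ℚ, P ⊆ S ∧ P.Infinite ∧ IsClosed P ∧ CrowdedIn P := by
  have hS : StmtAux.Crw S := by
    intro y hy ε hε
    have h := hcr y hy
    rw [Metric.mem_closure_iff] at h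
    obtain ⟨b, hb, hd⟩ := h ε hε
    refine ⟨b, hb.1, fun h' => hb.2 (by simp [h']), ?_⟩
    rw [Rat.dist_eq] at hd
    rwa [abs_sub_comm]
  obtain ⟨y0, hy0⟩ := hinf.nonempty
  set X : List ℕ → ℚ := StmtAux.X hS hy0 with hX
  set R : List ℕ → ℝ := StmtAux.R hS hy0 with hR
  have crowded : CrowdedIn (Set.range X) := by
    rintro q ⟨σ, rfl⟩
    rw [Metric.mem_closure_iff]
    intro ε hε
    obtain ⟨N, hN⟩ := exists_nat_one_div_lt hε
    have hcons := StmtAux.node_cons hS hy0 N σ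
    refine ⟨X (N :: σ), ⟨⟨N :: σ, rfl⟩, by simpa using hcons.1⟩, ?_⟩
    rw [Rat.dist_eq, abs_sub_comm]
    have h2 := hcons.2.1
    have hr := StmtAux.R_pos hS hy0 (N :: σ)
    have h3 : min (R σ) (1/(N+1:ℝ)) ≤ 1/(N+1:ℝ) := min_le_right _ _
    calc |(X (N :: σ) : ℝ) - (X σ : ℝ)| < 1/(N+1:ℝ) := by
          rw [hX, hR] at *; linarith
      _ < ε := hN
  have hclosure : closure (Set.range X) ⊆ Set.range X := by
    intro z hz
    by_contra hzP
    have hzP' : ∀ τ, X τ ≠ z := fun τ h => hzP ⟨τ, h⟩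
    have h0 : (z:ℝ) ∈ closure (StmtAux.Aset hS hy0 []) := by
      rw [Metric.mem_closure_iff]
      intro ε hε
      rw [Metric.mem_closure_iff] at hz
      obtain ⟨p, ⟨σ, rfl⟩, hd⟩ := hz ε hε
      refine ⟨(X σ : ℝ), ⟨σ, by simp [hX]⟩, ?_⟩
      rw [Real.dist_eq]
      rwa [Rat.dist_eq] at hd
    have key : ∀ i : ℕ, ∃ σ : List ℕ, σ.length = i ∧
        (z:ℝ) ∈ closure (StmtAux.Aset hS hy0 σ) := by
      intro i
      induction i with
      | zero => exact ⟨[], rfl, h0⟩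
      | succ i ih =>
        obtain ⟨σ, hlen, hcl⟩ := ih
        obtain ⟨n, hn⟩ := StmtAux.step hS hy0 hzP' hcl
        exact ⟨n :: σ, by simp [hlen], hn⟩
    have hL : Liouville (z:ℝ) := by
      intro N
      obtain ⟨σ, hlen, hcl⟩ := key N
      have hball := StmtAux.closure_Aset_ball hS hy0 hcl
      have hRl := StmtAux.R_liouville hS hy0 σ
      rw [hlen] at hRl
      have hden : (0:ℝ) < ((X σ).den : ℝ) := by exact_mod_cast (X σ).den_pos
      have hcast : ((2 * (X σ).num : ℤ) : ℝ) / ((2 * ((X σ).den : ℤ) : ℤ) : ℝ) = ((X σ) : ℝ) := by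
        push_cast
        rw [mul_div_mul_left _ _ (by norm_num : (2:ℝ) ≠ 0)]
        exact (Rat.cast_def _).symm
      refine ⟨2 * (X σ).num, 2 * ((X σ).den : ℤ), ?_, ?_, ?_⟩
      · have := (X σ).den_pos; omega
      · rw [hcast]
        intro h
        exact hzP' σ (by exact_mod_cast h.symm)
      · rw [hcast]
        have h1 : (1:ℝ) < 2 * ((X σ).den : ℝ) := by
          have : (1:ℝ) ≤ ((X σ).den : ℝ) := by exact_mod_cast (X σ).den_pos
          linarith
        calc |(z:ℝ) - ((X σ) : ℝ)| ≤ R σ := hball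
          _ ≤ (2 * (((X σ)).den : ℝ))⁻¹ ^ (N+1) := hRl
          _ < (2 * (((X σ)).den : ℝ))⁻¹ ^ N :=
            pow_lt_pow_right_of_lt_one₀ (by positivity) (inv_lt_one_of_one_lt₀ h1)
              (Nat.lt_succ_self N)
          _ = 1 / ((2 * ((X σ).den : ℤ) : ℤ) : ℝ) ^ N := by
            push_cast
            rw [one_div, inv_pow]
    exact Rat.not_irrational z hL.irrational
  have hinfP : (Set.range X).Infinite := by
    intro hfin
    have hx0 : X [] ∈ Set.range X := ⟨[], rfl⟩
    have hcl : IsClosed ((Set.range X) \ {X []}) :=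
      (hfin.subset Set.diff_subset).isClosed
    have h := crowded (X []) hx0
    rw [hcl.closure_eq] at h
    exact h.2 rfl
  exact ⟨Set.range X, by rintro q ⟨σ, rfl⟩; exact StmtAux.X_mem hS hy0 σ,
    hinfP, isClosed_of_closure_subset hclosure, crowded⟩
end

section
/- The family P = {A ⊆ ℚ : A contains an infinite perfect subset of ℚ} is a coideal on ℚ. -/
/-- `A` contains an infinite perfect (closed in ℚ and crowded) subset. -/
def ContainsInfPerfect (A : Set ℚ) : Prop :=
  ∃ P : Set ℚ, P ⊆ A ∧ P.Infinite ∧ IsClosed P ∧ CrowdedIn P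

section Aux

open Metric Set

/-- A set is scattered: every nonempty subset has an isolated point. -/
def ScatIn (S : Set ℚ) : Prop :=
  ∀ T ⊆ S, T.Nonempty → ∃ x ∈ T, ∃ U : Set ℚ, IsOpen U ∧ U ∩ T = {x}

lemma isolated_point_iff {T : Set ℚ} {x : ℚ} (hxT : x ∈ T) :
    (∃ U : Set ℚ, IsOpen U ∧ U ∩ T = {x}) ↔ x ∉ closure (T \ {x}) := by
  constructor
  · rintro ⟨U, hU, hUT⟩ hx
    rw [_root_.mem_closure_iff] at hx
    have hxU : x ∈ U := by
      have : x ∈ ({x} : Set ℚ) := rfl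
      rw [← hUT] at this; exact this.1
    obtain ⟨y, hyU, hyT, hyx⟩ := hx U hU hxU
    exact hyx (show y ∈ ({x} : Set ℚ) by rw [← hUT]; exact ⟨hyU, hyT⟩)
  · intro hx
    rw [_root_.mem_closure_iff] at hx
    push_neg at hx
    obtain ⟨U, hU, hxU, hUe⟩ := hx
    refine ⟨U, hU, Set.Subset.antisymm ?_ ?_⟩
    · intro y ⟨hyU, hyT⟩
      by_contra hyx
      have : y ∈ U ∩ (T \ {x}) := ⟨hyU, hyT, hyx⟩
      rw [hUe] at this
      exact this
    · rintro y rfl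
      exact ⟨hxU, hxT⟩

lemma scatIn_union {S₀ S₁ : Set ℚ} (h₀ : ScatIn S₀) (h₁ : ScatIn S₁) :
    ScatIn (S₀ ∪ S₁) := by
  intro T hT hTne
  by_cases hc : (T ∩ S₀).Nonempty
  · obtain ⟨x, hxT, U, hU, hUT⟩ := h₀ (T ∩ S₀) Set.inter_subset_right hc
    have hxU : x ∈ U := by
      have : x ∈ ({x} : Set ℚ) := rfl
      rw [← hUT] at this; exact this.1
    by_cases hx : ((U ∩ T) \ {x}).Nonempty
    case neg =>
      -- then U ∩ T = {x}, so x is isolated in T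
      refine ⟨x, hxT.1, U, hU, Set.Subset.antisymm ?_ ?_⟩
      · intro z hz
        by_contra hzx
        exact hx ⟨z, hz, hzx⟩
      · rintro z rfl
        exact ⟨hxU, hxT.1⟩
    case pos =>
      -- all points of (U ∩ T) \ {x} lie in S₁
      have hsub : (U ∩ T) \ {x} ⊆ S₁ := by
        rintro y ⟨⟨hyU, hyT⟩, hyx⟩
        rcases hT hyT with hy0 | hy1
        · exact absurd (show y ∈ ({x} : Set ℚ) by rw [← hUT]; exact ⟨hyU, hyT, hy0⟩)
            hyx
        · exact hy1
      obtain ⟨y, hy, V, hV, hVT⟩ := h₁ ((U ∩ T) \ {x}) hsub hx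
      obtain ⟨⟨hyU, hyT⟩, hyx⟩ := hy
      refine ⟨y, hyT, (U ∩ V) ∩ {x}ᶜ, ((hU.inter hV).inter isOpen_compl_singleton), ?_⟩
      apply Set.Subset.antisymm
      · rintro z ⟨⟨⟨hzU, hzV⟩, hzx⟩, hzT⟩
        have : z ∈ V ∩ ((U ∩ T) \ {x}) := ⟨hzV, ⟨hzU, hzT⟩, hzx⟩
        rw [hVT] at this; exact this
      · rintro z rfl
        have hyV : z ∈ V := by
          have : z ∈ ({z} : Set ℚ) := rfl
          rw [← hVT] at this; exact this.1
        exact ⟨⟨⟨hyU, hyV⟩, hyx⟩, hyT⟩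
  · -- T ⊆ S₁
    have hsub : T ⊆ S₁ := by
      intro y hy
      rcases hT hy with hy0 | hy1
      · exact absurd ⟨hy, hy0⟩ (fun h => hc ⟨y, h⟩)
      · exact hy1
    exact h₁ T hsub hTne

lemma not_scatIn_of_crowded {S C : Set ℚ} (hCS : C ⊆ S) (hne : C.Nonempty)
    (hC : CrowdedIn C) : ¬ ScatIn S := by
  intro hsc
  obtain ⟨x, hxC, hiso⟩ := hsc C hCS hne
  exact (isolated_point_iff hxC).1 hiso (hC x hxC)

lemma crowded_of_not_scatIn {S : Set ℚ} (h : ¬ ScatIn S) :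
    ∃ T ⊆ S, T.Nonempty ∧ CrowdedIn T := by
  rw [ScatIn] at h
  push_neg at h
  obtain ⟨T, hTS, hTne, hT⟩ := h
  refine ⟨T, hTS, hTne, fun x hxT => ?_⟩
  by_contra hx
  obtain ⟨U, hU, hUT⟩ := (isolated_point_iff hxT).2 hx
  exact hT x hxT U hU hUT

lemma crowded_infinite {P : Set ℚ} (hne : P.Nonempty) (hP : CrowdedIn P) :
    P.Infinite := by
  intro hfin
  obtain ⟨x, hx⟩ := hne
  have h1 : IsClosed (P \ {x}) := (hfin.subset (diff_subset)).isClosed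
  have h2 : x ∈ closure (P \ {x}) := hP x hx
  rw [h1.closure_eq] at h2
  exact h2.2 rfl

lemma exists_child {T : Set ℚ} (hT : CrowdedIn T) {x : ℚ} (hx : x ∈ T) {ρ : ℝ}
    (hρ : 0 < ρ) (r : ℚ) {ε : ℝ} (hε : 0 < ε) :
    ∃ p : ℚ × ℝ, p.1 ∈ T ∧ 0 < p.2 ∧ p.1 ≠ x ∧ dist p.1 x < ε ∧
      closedBall p.1 p.2 ⊆ closedBall x ρ ∧
      closedBall p.1 p.2 ⊆ ball x ε ∧
      r ∉ closedBall p.1 p.2 := by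
  set m : ℝ := min ρ ε with hm
  have hm0 : 0 < m := lt_min hρ hε
  set δ : ℝ := if r = x then m / 2 else min (m / 2) (dist r x) with hδ
  have hδ0 : 0 < δ := by
    rw [hδ]; split
    · positivity
    · exact lt_min (by positivity) (dist_pos.2 (by assumption))
  have hδm : δ ≤ m / 2 := by
    rw [hδ]; split
    · exact le_refl _
    · exact min_le_left _ _
  have hxc := hT x hx
  rw [Metric.mem_closure_iff] at hxc
  obtain ⟨y, ⟨hyT, hyx⟩, hdy⟩ := hxc δ hδ0
  rw [Set.mem_singleton_iff] at hyx
  have hdyx : dist y x < δ := by rwa [dist_comm] at hdy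
  have hyr : y ≠ r := by
    rcases eq_or_ne r x with h | h
    · rw [h]; exact hyx
    · intro hyr
      have : δ ≤ dist r x := by rw [hδ, if_neg h]; exact min_le_right _ _
      rw [← hyr] at this
      exact absurd (lt_of_lt_of_le hdyx this) (lt_irrefl _)
  have hyrd : (0:ℝ) < dist y r := dist_pos.2 hyr
  refine ⟨(y, min (m / 4) (dist y r / 2)), hyT, lt_min (by positivity) (by positivity),
    hyx, lt_of_lt_of_le (lt_of_lt_of_le hdyx hδm) (by linarith [min_le_right ρ ε]), ?_, ?_, ?_⟩
  · intro z hz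
    rw [Metric.mem_closedBall] at *
    have h1 : dist z y ≤ m / 4 := le_trans hz (min_le_left _ _)
    have h2 : dist z x ≤ dist z y + dist y x := dist_triangle z y x
    have : m ≤ ρ := min_le_left _ _
    nlinarith [hδm, hdyx]
  · intro z hz
    rw [Metric.mem_closedBall] at hz
    rw [Metric.mem_ball]
    have h1 : dist z y ≤ m / 4 := le_trans hz (min_le_left _ _)
    have h2 : dist z x ≤ dist z y + dist y x := dist_triangle z y x
    have : m ≤ ε := min_le_right _ _
    nlinarith [hδm, hdyx]
  · rw [Metric.mem_closedBall]
    push_neg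
    calc min (m / 4) (dist y r / 2) ≤ dist y r / 2 := min_le_right _ _
      _ < dist y r := by linarith
      _ = dist r y := dist_comm y r

noncomputable def treeNode {T : Set ℚ} (hT : CrowdedIn T) {t₀ : ℚ} (ht₀ : t₀ ∈ T)
    (e : ℕ → ℚ) : List ℕ → {p : ℚ × ℝ // p.1 ∈ T ∧ 0 < p.2}
  | [] => ⟨(t₀, 1), ht₀, one_pos⟩
  | k :: s =>
    let p := treeNode hT ht₀ e s
    let h := exists_child hT p.2.1 p.2.2 (e s.length)
      (show (0:ℝ) < (1/2) ^ k by positivity)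
    ⟨h.choose, h.choose_spec.1, h.choose_spec.2.1⟩

lemma treeNode_spec {T : Set ℚ} (hT : CrowdedIn T) {t₀ : ℚ} (ht₀ : t₀ ∈ T)
    (e : ℕ → ℚ) (k : ℕ) (s : List ℕ) :
    (treeNode hT ht₀ e (k :: s)).1.1 ≠ (treeNode hT ht₀ e s).1.1 ∧
    dist (treeNode hT ht₀ e (k :: s)).1.1 (treeNode hT ht₀ e s).1.1 < (1/2) ^ k ∧
    closedBall (treeNode hT ht₀ e (k :: s)).1.1 (treeNode hT ht₀ e (k :: s)).1.2 ⊆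
      closedBall (treeNode hT ht₀ e s).1.1 (treeNode hT ht₀ e s).1.2 ∧
    closedBall (treeNode hT ht₀ e (k :: s)).1.1 (treeNode hT ht₀ e (k :: s)).1.2 ⊆
      ball (treeNode hT ht₀ e s).1.1 ((1/2 : ℝ) ^ k) ∧
    e s.length ∉ closedBall (treeNode hT ht₀ e (k :: s)).1.1 (treeNode hT ht₀ e (k :: s)).1.2 := by
  have h := (exists_child hT (treeNode hT ht₀ e s).2.1 (treeNode hT ht₀ e s).2.2
    (e s.length) (show (0:ℝ) < (1/2) ^ k by positivity)).choose_spec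
  exact ⟨h.2.2.1, h.2.2.2.1, h.2.2.2.2.1, h.2.2.2.2.2.1, h.2.2.2.2.2.2⟩

lemma containsInfPerfect_of_crowded {T : Set ℚ} (hne : T.Nonempty)
    (hT : CrowdedIn T) : ContainsInfPerfect T := by
  obtain ⟨e, he⟩ := exists_surjective_nat ℚ
  obtain ⟨t₀, ht₀⟩ := hne
  set f : List ℕ → ℚ := fun s => (treeNode hT ht₀ e s).1.1 with hf
  set g : List ℕ → ℝ := fun s => (treeNode hT ht₀ e s).1.2 with hg
  have hfT : ∀ s, f s ∈ T := fun s => (treeNode hT ht₀ e s).2.1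
  have hg0 : ∀ s, 0 < g s := fun s => (treeNode hT ht₀ e s).2.2
  have spec := fun k s => treeNode_spec hT ht₀ e k s
  set P : Set ℚ := Set.range f with hP
  set Ps : List ℕ → Set ℚ := fun s => f '' {t | s <:+ t} with hPs
  -- nesting of closed balls
  have L1 : ∀ t s : List ℕ, s <:+ t →
      closedBall (f t) (g t) ⊆ closedBall (f s) (g s) := by
    intro t
    induction t with
    | nil => intro s hs; rw [List.suffix_nil] at hs; subst hs; exact le_refl _
    | cons k t ih =>
      intro s hs
      rcases List.suffix_cons_iff.1 hs with rfl | hs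
      · exact le_refl _
      · exact ((spec k t).2.2.1).trans (ih s hs)
  have L1' : ∀ t s : List ℕ, s <:+ t → f t ∈ closedBall (f s) (g s) := by
    intro t s hs
    exact L1 t s hs (Metric.mem_closedBall.2 (by simp [le_of_lt (hg0 t)]))
  -- all descendants of k :: s are within (1/2)^k of f s
  have L2 : ∀ (k : ℕ) (s : List ℕ), Ps (k :: s) ⊆ ball (f s) ((1/2 : ℝ) ^ k) := by
    rintro k s y ⟨t, ht, rfl⟩
    exact (spec k s).2.2.2.1 (L1' t (k :: s) ht)
  -- descendants of s are within the closed ball at s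
  have L2' : ∀ s : List ℕ, Ps s ⊆ closedBall (f s) (g s) := by
    rintro s y ⟨t, ht, rfl⟩
    exact L1' t s ht
  -- decomposition of the set of extensions of s
  have Ldec : ∀ s : List ℕ, Ps s = {f s} ∪ ⋃ k, Ps (k :: s) := by
    intro s
    apply Set.Subset.antisymm
    · rintro y ⟨t, ht, rfl⟩
      rcases eq_or_ne t s with rfl | hts
      · exact Or.inl rfl
      · rcases List.eq_nil_or_concat (ht.choose) with hnil | ⟨u, k, hu⟩
        · exfalso; apply hts
          have := ht.choose_spec
          rw [hnil] at this
          exact this.symm ▸ rfl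
        · right
          have hts' := ht.choose_spec
          rw [hu] at hts'
          refine Set.mem_iUnion.2 ⟨k, t, ?_, rfl⟩
          exact ⟨u, by rw [← hts']; simp⟩
    · rintro y (hy | hy)
      · exact ⟨s, List.suffix_refl s, hy.symm⟩
      · obtain ⟨k, t, ht, rfl⟩ := Set.mem_iUnion.1 hy
        exact ⟨t, ((List.suffix_cons k s).trans ht), rfl⟩
  -- P is closed
  have hclosed : IsClosed P := by
    apply isClosed_of_closure_subset
    intro x hx
    by_contra hxP
    have key : ∀ n : ℕ, ∃ s : List ℕ, s.length = n ∧ x ∈ closure (Ps s) := by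
      intro n
      induction n with
      | zero =>
        refine ⟨[], rfl, ?_⟩
        have : Ps [] = P := by
          rw [hPs, hP]
          simp only [List.nil_suffix]
          exact Set.image_univ.symm ▸ (by ext y; simp [Set.mem_image, Set.mem_range])
        rwa [this]
      | succ n ih =>
        obtain ⟨s, hlen, hcl⟩ := ih
        have hxfs : x ≠ f s := fun h => hxP (h ▸ ⟨s, rfl⟩)
        have hδ : (0:ℝ) < dist x (f s) := dist_pos.2 hxfs
        obtain ⟨K, hK⟩ := exists_pow_lt_of_lt_one hδ (show (1/2 : ℝ) < 1 by norm_num)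
        -- split the union at K
        have hsplit : Ps s ⊆ {f s} ∪ (⋃ k ∈ Set.Iio K, Ps (k :: s)) ∪
            closedBall (f s) ((1/2 : ℝ) ^ K) := by
          rw [Ldec s]
          rintro y (hy | hy)
          · exact Or.inl (Or.inl hy)
          · obtain ⟨k, t, ht, rfl⟩ := Set.mem_iUnion.1 hy
            by_cases hk : k < K
            · exact Or.inl (Or.inr (Set.mem_biUnion hk ⟨t, ht, rfl⟩))
            · right
              have h1 : f t ∈ ball (f s) ((1/2 : ℝ) ^ k) := L2 k s ⟨t, ht, rfl⟩
              have h2 : ((1/2 : ℝ) ^ k) ≤ (1/2 : ℝ) ^ K :=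
                pow_le_pow_of_le_one (by norm_num) (by norm_num) (le_of_not_gt hk)
              exact Metric.mem_closedBall.2 (le_trans (le_of_lt (Metric.mem_ball.1 h1)) h2)
        have hcl' := closure_mono hsplit hcl
        rw [closure_union, closure_union] at hcl'
        rcases hcl' with (hc | hc) | hc
        · rw [closure_singleton] at hc
          exact absurd hc hxfs
        · rw [Set.Finite.closure_biUnion (Set.finite_Iio K)
              (fun k => Ps (k :: s))] at hc
          obtain ⟨k, -, hck⟩ := Set.mem_iUnion₂.1 hc
          exact ⟨k :: s, by simp [hlen], hck⟩
        · rw [IsClosed.closure_eq Metric.isClosed_closedBall] at hc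
          rw [Metric.mem_closedBall] at hc
          linarith
    -- x differs from every rational
    obtain ⟨m, hm⟩ := he x
    obtain ⟨s, hlen, hcl⟩ := key (m + 1)
    match s, hlen with
    | k :: s', hlen =>
      have h1 : closure (Ps (k :: s')) ⊆ closedBall (f (k :: s')) (g (k :: s')) :=
        closure_minimal (L2' (k :: s')) Metric.isClosed_closedBall
      have h2 : x ∈ closedBall (f (k :: s')) (g (k :: s')) := h1 hcl
      have h3 : e s'.length ∉ closedBall (f (k :: s')) (g (k :: s')) :=
        (spec k s').2.2.2.2
      have hlen' : s'.length = m := by simpa using hlen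
      rw [hlen', hm] at h3
      exact h3 h2
  -- P is crowded
  have hcrowd : CrowdedIn P := by
    rintro x ⟨s, rfl⟩
    rw [Metric.mem_closure_iff]
    intro ε hε
    obtain ⟨k, hk⟩ := exists_pow_lt_of_lt_one hε (show (1/2:ℝ) < 1 by norm_num)
    refine ⟨f (k :: s), ⟨⟨k :: s, rfl⟩, (spec k s).1⟩, ?_⟩
    rw [dist_comm]
    exact lt_trans (spec k s).2.1 hk
  exact ⟨P, fun y ⟨s, hs⟩ => hs ▸ hfT s,
    crowded_infinite ⟨f [], ⟨[], rfl⟩⟩ hcrowd, hclosed, hcrowd⟩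

end Aux

/-- The family of subsets of ℚ containing an infinite perfect set is a coideal. -/
theorem stmt2 :
    (∅ ∉ {A : Set ℚ | ContainsInfPerfect A}) ∧
    (∀ A, ContainsInfPerfect A → ∀ B : Set ℚ, A ⊆ B → ContainsInfPerfect B) ∧
    (∀ A, ContainsInfPerfect A → ∀ A₀ A₁ : Set ℚ, A = A₀ ∪ A₁ →
      ContainsInfPerfect A₀ ∨ ContainsInfPerfect A₁) := by
  refine ⟨?_, ?_, ?_⟩
  · rintro ⟨P, hP, hinf, -⟩
    exact hinf.nonempty.elim fun x hx => (hP hx).elim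
  · rintro A ⟨P, hPA, h⟩ B hAB
    exact ⟨P, hPA.trans hAB, h⟩
  · rintro A ⟨P, hPA, hPinf, hPcl, hPcr⟩ A₀ A₁ hA
    have hPne : P.Nonempty := hPinf.nonempty
    have hsplit : P ⊆ (A₀ ∩ P) ∪ (A₁ ∩ P) := by
      intro x hx
      rcases (hA ▸ hPA hx : x ∈ A₀ ∪ A₁) with h | h
      · exact Or.inl ⟨h, hx⟩
      · exact Or.inr ⟨h, hx⟩
    by_cases h₀ : ScatIn (A₀ ∩ P)
    · by_cases h₁ : ScatIn (A₁ ∩ P)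
      · exact absurd (scatIn_union h₀ h₁) (not_scatIn_of_crowded hsplit hPne hPcr)
      · right
        obtain ⟨C, hCS, hCne, hCcr⟩ := crowded_of_not_scatIn h₁
        obtain ⟨Q, hQ, hQrest⟩ := containsInfPerfect_of_crowded hCne hCcr
        exact ⟨Q, hQ.trans (hCS.trans Set.inter_subset_left), hQrest⟩
    · left
      obtain ⟨C, hCS, hCne, hCcr⟩ := crowded_of_not_scatIn h₀
      obtain ⟨Q, hQ, hQrest⟩ := containsInfPerfect_of_crowded hCne hCcr
      exact ⟨Q, hQ.trans (hCS.trans Set.inter_subset_left), hQrest⟩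
end

section
/- There exists a nonprincipal ultrafilter on ℚ with a base of perfect subsets of ℚ if and only if there exists an ultrafilter on ℚ⁺ (the positive rationals) with a base of sets that are perfect and unbounded (in the order sense) in ℚ⁺. -/
/-- The positive rationals, as a (topological, ordered) subtype of ℚ. -/
abbrev Qpos := {q : ℚ // 0 < q}

open Filter Set Topology

lemma mem_closure_inter {α : Type*} [TopologicalSpace α] {s t : Set α} {a : α}
    (ha : a ∈ closure s) (ht : IsOpen t) (hat : a ∈ t) : a ∈ closure (s ∩ t) := by
  rw [mem_closure_iff] at ha ⊢
  intro o ho hao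
  obtain ⟨x, hx1, hx2⟩ := ha (o ∩ t) (ho.inter ht) ⟨hao, hat⟩
  exact ⟨x, hx1.1, hx2, hx1.2⟩

lemma neg_base (u : Ultrafilter ℚ)
    (hb : ∀ A ∈ u, ∃ X ∈ u, X ⊆ A ∧ IsClosed X ∧ CrowdedIn X) :
    ∀ A ∈ u.map (fun q : ℚ => -q), ∃ X ∈ u.map (fun q : ℚ => -q),
      X ⊆ A ∧ IsClosed X ∧ CrowdedIn X := by
  intro A hA
  have h2 : (fun q : ℚ => -q) ⁻¹' A ∈ u := Ultrafilter.mem_map.1 hA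
  obtain ⟨Y, hYu, hYsub, hYcl, hYcr⟩ := hb _ h2
  refine ⟨-Y, ?_, ?_, ?_, ?_⟩
  · refine Ultrafilter.mem_map.2 (mem_of_superset hYu ?_)
    intro q hq
    simpa using hq
  · intro x hx
    have := hYsub (Set.mem_neg.1 hx)
    simpa using this
  · exact hYcl.neg
  · intro x hx
    have h3 : -x ∈ closure (Y \ {-x}) := hYcr _ (Set.mem_neg.1 hx)
    have h4 : -(Y \ {-x}) = (-Y) \ {x} := by
      ext z
      simp only [Set.mem_neg, Set.mem_diff, Set.mem_singleton_iff]
      constructor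
      · rintro ⟨h5, h6⟩; exact ⟨h5, fun h => h6 (by rw [h])⟩
      · rintro ⟨h5, h6⟩; exact ⟨h5, fun h => h6 (neg_injective h)⟩
    have := Set.neg_mem_neg.2 h3
    rwa [neg_neg, neg_closure, h4] at this

lemma backward_dir (v : Ultrafilter Qpos)
    (hv : ∀ A ∈ v, ∃ X ∈ v, X ⊆ A ∧ IsClosed X ∧ CrowdedIn X ∧
      ∀ b : ℚ, ∃ x ∈ X, b < (x : ℚ)) :
    ∃ u : Ultrafilter ℚ, (∀ q : ℚ, u ≠ pure q) ∧
      ∀ A ∈ u, ∃ X ∈ u, X ⊆ A ∧ IsClosed X ∧ CrowdedIn X := by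
  have hunb : ∀ A ∈ v, ∀ b : ℚ, ∃ x ∈ A, b < (x : ℚ) := by
    intro A hA b
    obtain ⟨X, _, hXA, -, -, hXu⟩ := hv A hA
    obtain ⟨x, hx1, hx2⟩ := hXu b
    exact ⟨x, hXA hx1, hx2⟩
  refine ⟨v.map Subtype.val, ?_, ?_⟩
  · intro q hq
    have h1 : {q} ∈ v.map Subtype.val := by rw [hq]; exact rfl
    have h2 : Subtype.val ⁻¹' ({q} : Set ℚ) ∈ v := Ultrafilter.mem_map.1 h1
    obtain ⟨x, hx1, hx2⟩ := hunb _ h2 q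
    rw [Set.mem_preimage, Set.mem_singleton_iff] at hx1
    rw [hx1] at hx2
    exact lt_irrefl _ hx2
  · intro A hA
    have h2 : Subtype.val ⁻¹' A ∈ v := Ultrafilter.mem_map.1 hA
    have hone : {x : Qpos | 1 ≤ (x : ℚ)} ∈ v := by
      by_contra h
      have h3 : {x : Qpos | 1 ≤ (x : ℚ)}ᶜ ∈ v := Ultrafilter.compl_mem_iff_notMem.2 h
      obtain ⟨x, hx1, hx2⟩ := hunb _ h3 1
      exact hx1 (le_of_lt hx2)
    obtain ⟨X, hXv, hXsub, hXcl, hXcr, hXu⟩ := hv _ (inter_mem h2 hone)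
    refine ⟨Subtype.val '' X, ?_, ?_, ?_, ?_⟩
    · exact Ultrafilter.mem_map.2 (mem_of_superset hXv (Set.subset_preimage_image _ _))
    · rintro p ⟨x, hx, rfl⟩
      exact (hXsub hx).1
    · -- closed
      have hX1 : ∀ p ∈ closure (Subtype.val '' X), (1 : ℚ) ≤ p := by
        intro p hp
        have hcl : IsClosed {q : ℚ | 1 ≤ q} := isClosed_le continuous_const continuous_id
        have : closure (Subtype.val '' X) ⊆ {q : ℚ | 1 ≤ q} := by
          apply closure_minimal _ hcl
          rintro p' ⟨x, hx, rfl⟩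
          exact (hXsub hx).2
        exact this hp
      rw [← closure_eq_iff_isClosed, Set.Subset.antisymm_iff]
      refine ⟨?_, subset_closure⟩
      intro p hp
      have hp1 : (1 : ℚ) ≤ p := hX1 p hp
      have hp0 : (0 : ℚ) < p := lt_of_lt_of_le one_pos hp1
      have hx : (⟨p, hp0⟩ : Qpos) ∈ closure X := by
        rw [closure_subtype]
        exact hp
      exact ⟨⟨p, hp0⟩, hXcl.closure_subset hx, rfl⟩
    · rintro p ⟨x, hx, rfl⟩
      have h3 := hXcr x hx
      rw [closure_subtype] at h3
      have h4 : Subtype.val '' (X \ {x}) = Subtype.val '' X \ {(x : ℚ)} := by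
        rw [Set.image_diff Subtype.val_injective, Set.image_singleton]
      rwa [h4] at h3

lemma main_inf (u : Ultrafilter ℚ)
    (hb : ∀ A ∈ u, ∃ X ∈ u, X ⊆ A ∧ IsClosed X ∧ CrowdedIn X)
    (htop : ∀ b : ℚ, {q : ℚ | b < q} ∈ u) :
    ∃ v : Ultrafilter Qpos, ∀ A ∈ v, ∃ X ∈ v, X ⊆ A ∧ IsClosed X ∧ CrowdedIn X ∧
      ∀ b : ℚ, ∃ x ∈ X, b < (x : ℚ) := by
  have fpos : ∀ q : ℚ, 0 < max q 1 := fun q => lt_max_iff.2 (Or.inr one_pos)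
  set f : ℚ → Qpos := fun q => ⟨max q 1, fpos q⟩ with hf
  refine ⟨u.map f, ?_⟩
  intro A hA
  have h2 : f ⁻¹' A ∈ u := Ultrafilter.mem_map.1 hA
  obtain ⟨Y, hYu, hYsub, hYcl, hYcr⟩ := hb _ (inter_mem h2 (htop 1))
  have hY1 : ∀ {q : ℚ}, q ∈ Y → 1 < q := fun hq => (hYsub hq).2
  have hfY : ∀ {q : ℚ} (hq : q ∈ Y), f q = ⟨q, lt_trans one_pos (hY1 hq)⟩ := by
    intro q hq
    exact Subtype.ext (max_eq_left (le_of_lt (hY1 hq)))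
  set X : Set Qpos := Subtype.val ⁻¹' Y with hX
  have hvX : ∀ {x : Qpos}, x ∈ X ↔ (x : ℚ) ∈ Y := Iff.rfl
  refine ⟨X, ?_, ?_, ?_, ?_, ?_⟩
  · refine Ultrafilter.mem_map.2 (mem_of_superset hYu ?_)
    intro q hq
    have : f q = ⟨q, _⟩ := hfY hq
    simpa [Set.mem_preimage, this, hX] using hq
  · intro x hx
    have h3 : (x : ℚ) ∈ Y := hx
    have h4 : f (x : ℚ) ∈ A := (hYsub h3).1
    have h5 : f (x : ℚ) = x := Subtype.ext (max_eq_left (le_of_lt (hY1 h3)))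
    rwa [h5] at h4
  · exact hYcl.preimage continuous_subtype_val
  · intro x hx
    rw [closure_subtype]
    have h3 := hYcr _ (hvX.1 hx)
    have h4 : Y \ {(x : ℚ)} ⊆ Subtype.val '' (X \ {x}) := by
      intro p hp
      have hp0 : (0 : ℚ) < p := lt_trans one_pos (hY1 hp.1)
      refine ⟨⟨p, hp0⟩, ⟨hp.1, ?_⟩, rfl⟩
      intro h
      exact hp.2 (by simpa using congrArg Subtype.val (Set.mem_singleton_iff.1 h))
    exact closure_mono h4 h3
  · intro b
    obtain ⟨q, hq1, hq2⟩ := Ultrafilter.nonempty_of_mem (inter_mem hYu (htop (max b 1)))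
    have hq3 : max b 1 < q := hq2
    exact ⟨⟨q, lt_trans one_pos (lt_of_le_of_lt (le_max_right b 1) hq3)⟩, hq1,
      lt_of_le_of_lt (le_max_left b 1) hq3⟩


lemma mem_closure_inter' {α : Type*} [TopologicalSpace α] {s t : Set α} {a : α}
    (ha : a ∈ closure s) (ht : IsOpen t) (hat : a ∈ t) : a ∈ closure (s ∩ t) := by
  rw [mem_closure_iff] at ha ⊢
  intro o ho hao
  obtain ⟨x, hx1, hx2⟩ := ha (o ∩ t) (ho.inter ht) ⟨hao, hat⟩
  exact ⟨x, hx1.1, hx2, hx1.2⟩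

lemma main_irr (u : Ultrafilter ℚ) (r : ℝ) (hirr : Irrational r)
    (hb : ∀ A ∈ u, ∃ X ∈ u, X ⊆ A ∧ IsClosed X ∧ CrowdedIn X)
    (hnear : ∀ ε : ℝ, 0 < ε → {q : ℚ | r < (q : ℝ) ∧ (q : ℝ) < r + ε} ∈ u) :
    ∃ v : Ultrafilter Qpos, ∀ A ∈ v, ∃ X ∈ v, X ⊆ A ∧ IsClosed X ∧ CrowdedIn X ∧
      ∀ b : ℚ, ∃ x ∈ X, b < (x : ℚ) := by
  classical
  -- the scales
  set ε : ℕ → ℚ := fun n => 1 / (n + 1) with hε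
  have hεpos : ∀ n, (0 : ℚ) < ε n := by
    intro n; rw [hε]; positivity
  have hεcast : ∀ n : ℕ, ((ε n : ℚ) : ℝ) = 1 / ((n : ℝ) + 1) := by
    intro n; rw [hε]; push_cast; ring
  have hεanti : ∀ {a b : ℕ}, a ≤ b → ((ε b : ℚ) : ℝ) ≤ ((ε a : ℚ) : ℝ) := by
    intro a b hab
    rw [hεcast, hεcast]
    apply one_div_le_one_div_of_le
    · positivity
    · exact_mod_cast add_le_add_left (Nat.cast_le.2 hab) 1
  -- the clopen pieces
  set D : ℕ → Set ℚ := fun n => {q : ℚ | r + ((ε (n + 1) : ℚ) : ℝ) < (q : ℝ) ∧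
      (q : ℝ) < r + ((ε n : ℚ) : ℝ)} with hD
  have hdisj : ∀ {m n : ℕ} {q : ℚ}, q ∈ D m → q ∈ D n → m = n := by
    intro m n q hm hn
    by_contra hne
    rcases Nat.lt_or_ge m n with h | h
    · have h1 : ((ε n : ℚ) : ℝ) ≤ ((ε (m + 1) : ℚ) : ℝ) := hεanti h
      have := hm.1
      have := hn.2
      linarith
    · have hnm : n < m := by omega
      have h1 : ((ε m : ℚ) : ℝ) ≤ ((ε (n + 1) : ℚ) : ℝ) := hεanti hnm
      have := hn.1
      have := hm.2
      linarith
  have hirrn : ∀ n : ℕ, Irrational (r + ((ε n : ℚ) : ℝ)) := fun n => hirr.add_ratCast (ε n)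
  have hDclosed : ∀ n, IsClosed (D n) := by
    intro n
    have heq : D n = Rat.cast ⁻¹' (Set.Icc (r + ((ε (n + 1) : ℚ) : ℝ)) (r + ((ε n : ℚ) : ℝ))) := by
      ext q
      simp only [hD, Set.mem_setOf_eq, Set.mem_preimage, Set.mem_Icc]
      constructor
      · rintro ⟨h1, h2⟩; exact ⟨le_of_lt h1, le_of_lt h2⟩
      · rintro ⟨h1, h2⟩
        refine ⟨lt_of_le_of_ne h1 ?_, lt_of_le_of_ne h2 ?_⟩
        · exact fun h => (hirrn (n + 1)).ne_rat q h
        · exact fun h => (hirrn n).ne_rat q h.symm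
    rw [heq]
    exact isClosed_Icc.preimage Rat.continuous_coe_real
  have hDopen : ∀ n, IsOpen (D n) := by
    intro n
    have heq : D n = Rat.cast ⁻¹' (Set.Ioo (r + ((ε (n + 1) : ℚ) : ℝ)) (r + ((ε n : ℚ) : ℝ))) := rfl
    rw [heq]
    exact isOpen_Ioo.preimage Rat.continuous_coe_real
  -- the translations
  have htex : ∀ n : ℕ, ∃ t : ℚ, ((n : ℝ) + 1) - (r + ((ε (n + 1) : ℚ) : ℝ)) < (t : ℝ) ∧
      (t : ℝ) < ((n : ℝ) + 2) - (r + ((ε n : ℚ) : ℝ)) := by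
    intro n
    apply exists_rat_btwn
    have h1 := hεcast n
    have h2 := hεcast (n + 1)
    have h3 : ((ε n : ℚ) : ℝ) ≤ 1 := by
      rw [h1]
      rw [div_le_one (by positivity)]
      have : (0:ℝ) ≤ (n:ℝ) := Nat.cast_nonneg n
      linarith
    have h4 : (0 : ℝ) < ((ε (n+1) : ℚ) : ℝ) := by rw [h2]; positivity
    linarith
  choose t ht using htex
  have htq : ∀ {n : ℕ} {q : ℚ}, q ∈ D n →
      ((n : ℝ) + 1 < ((q + t n : ℚ) : ℝ) ∧ ((q + t n : ℚ) : ℝ) < (n : ℝ) + 2) := by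
    intro n q hq
    have h1 := (ht n).1
    have h2 := (ht n).2
    have h3 := hq.1
    have h4 := hq.2
    push_cast
    constructor <;> linarith
  -- the map
  set f₀ : ℚ → ℚ := fun q => if h : ∃ n, q ∈ D n then q + t h.choose else 1 with hf₀def
  have hf₀ : ∀ {n : ℕ} {q : ℚ}, q ∈ D n → f₀ q = q + t n := by
    intro n q hq
    have h : ∃ k, q ∈ D k := ⟨n, hq⟩
    rw [hf₀def]
    simp only [dif_pos h]
    rw [hdisj h.choose_spec hq]
  have hf₀pos : ∀ q : ℚ, 0 < f₀ q := by
    intro q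
    by_cases h : ∃ n, q ∈ D n
    · obtain ⟨n, hn⟩ := h
      rw [hf₀ hn]
      have := (htq hn).1
      have h2 : (0 : ℝ) < ((q + t n : ℚ) : ℝ) := by
        have : (0:ℝ) ≤ (n:ℝ) := Nat.cast_nonneg n
        linarith
      exact_mod_cast h2
    · rw [hf₀def]; simp only [dif_neg h]; exact one_pos
  set f : ℚ → Qpos := fun q => ⟨f₀ q, hf₀pos q⟩ with hfdef
  -- membership of neighborhoods
  have hC : ∀ n : ℕ, {q : ℚ | r < (q : ℝ) ∧ (q : ℝ) < r + ((ε n : ℚ) : ℝ)} ∈ u := by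
    intro n
    apply hnear
    exact_mod_cast hεpos n
  -- every point near r on the right lies in some D n
  have hCD : ∀ q : ℚ, r < (q : ℝ) → (q : ℝ) < r + ((ε 0 : ℚ) : ℝ) → ∃ n, q ∈ D n := by
    intro q hq0 hq1
    set y : ℝ := (q : ℝ) - r with hy
    have hy0 : 0 < y := by rw [hy]; linarith
    have h00 : ((ε 0 : ℚ) : ℝ) = 1 := by rw [hεcast]; norm_num
    have hy1 : y < 1 := by
      rw [h00] at hq1
      rw [hy]; linarith
    have hyirr : Irrational y := by
      have : y = -(r - (q:ℚ)) := by rw [hy]; ring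
      rw [this]
      exact (hirr.sub_ratCast q).neg
    have h1y : (1 : ℝ) < 1 / y := by
      rw [lt_div_iff₀ hy0]; linarith
    set m : ℤ := ⌊1 / y⌋ with hm
    have hm1 : 1 ≤ m := by
      rw [hm]
      exact Int.le_floor.2 (by exact_mod_cast h1y.le)
    have hmle : (m : ℝ) ≤ 1 / y := Int.floor_le _
    have hmlt : (m : ℝ) < 1 / y := by
      rcases eq_or_lt_of_le hmle with heq | hlt
      · exfalso
        have hm0 : (0 : ℝ) < (m : ℝ) := by exact_mod_cast hm1
        have hmy : (m : ℝ) * y = 1 := by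
          rw [heq]; field_simp
        have hy' : y = (((m : ℚ)⁻¹ : ℚ) : ℝ) := by
          push_cast
          rw [inv_eq_one_div, eq_div_iff hm0.ne']
          linarith
        exact hyirr ⟨(m : ℚ)⁻¹, hy'.symm⟩
      · exact hlt
    have hup : 1 / y < (m : ℝ) + 1 := Int.lt_floor_add_one _
    set n : ℕ := (m - 1).toNat with hn
    have hncast : (n : ℝ) = (m : ℝ) - 1 := by
      have : ((m - 1).toNat : ℤ) = m - 1 := Int.toNat_of_nonneg (by omega)
      rw [hn]
      exact_mod_cast congrArg (Int.cast : ℤ → ℝ) this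
    refine ⟨n, ?_, ?_⟩
    · -- r + ε (n+1) < q  i.e.  1/(n+2) < y
      rw [hεcast]
      have h2 : 1 / y < (n : ℝ) + 2 := by rw [hncast]; linarith
      have h3 : 1 < y * ((n : ℝ) + 2) := by
        rw [div_lt_iff₀ hy0] at h2; linarith
      have h4 : 1 / ((n : ℝ) + 1 + 1) < y := by
        rw [div_lt_iff₀ (by positivity)]
        push_cast
        linarith
      have : (((n : ℕ) + 1 : ℕ) : ℝ) + 1 = (n : ℝ) + 1 + 1 := by push_cast; ring
      rw [this]
      rw [hy] at h4
      linarith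
    · -- q < r + ε n  i.e.  y < 1/(n+1)
      rw [hεcast]
      have h2 : (n : ℝ) + 1 < 1 / y := by rw [hncast]; linarith
      have h3 : y * ((n : ℝ) + 1) < 1 := by
        rw [lt_div_iff₀ hy0] at h2; linarith
      have h4 : y < 1 / ((n : ℝ) + 1) := by
        rw [lt_div_iff₀ (by positivity)]
        linarith
      rw [hy] at h4
      linarith
  refine ⟨u.map f, ?_⟩
  intro A hA
  have h2 : f ⁻¹' A ∈ u := Ultrafilter.mem_map.1 hA
  obtain ⟨Y, hYu, hYsub, hYcl, hYcr⟩ := hb _ (inter_mem h2 (hC 0))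
  have hYD : ∀ {q : ℚ}, q ∈ Y → ∃ n, q ∈ D n := by
    intro q hq
    exact hCD q (hYsub hq).2.1 (hYsub hq).2.2
  set S : Set ℚ := ⋃ n : ℕ, (fun q => q + t n) '' (Y ∩ D n) with hSdef
  have hSf : ∀ {q : ℚ}, q ∈ Y → f₀ q ∈ S := by
    intro q hq
    obtain ⟨n, hn⟩ := hYD hq
    rw [hf₀ hn]
    exact Set.mem_iUnion.2 ⟨n, ⟨q, ⟨hq, hn⟩, rfl⟩⟩
  have hSrep : ∀ {p : ℚ}, p ∈ S → ∃ n, ∃ q, (q ∈ Y ∩ D n) ∧ p = q + t n := by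
    intro p hp
    obtain ⟨n, q, hq, hrfl⟩ := Set.mem_iUnion.1 hp
    exact ⟨n, q, hq, hrfl.symm⟩
  have hSpos : ∀ {p : ℚ}, p ∈ S → (0 : ℚ) < p := by
    intro p hp
    obtain ⟨n, q, hq, rfl⟩ := hSrep hp
    have h1 := (htq hq.2).1
    have h3 : (0 : ℝ) < ((q + t n : ℚ) : ℝ) := by
      have h4 : (0 : ℝ) ≤ (n : ℝ) := Nat.cast_nonneg n
      linarith
    exact_mod_cast h3
  set X : Set Qpos := Subtype.val ⁻¹' S with hXdef
  refine ⟨X, ?_, ?_, ?_, ?_, ?_⟩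
  · refine Ultrafilter.mem_map.2 (mem_of_superset hYu ?_)
    intro q hq
    exact hSf hq
  · intro x hx
    have hxS : (x : ℚ) ∈ S := hx
    obtain ⟨n, q, hq, hxval⟩ := hSrep hxS
    have hfqA : f q ∈ A := (hYsub hq.1).1
    have hfq : f q = x := by
      apply Subtype.ext
      show f₀ q = (x : ℚ)
      rw [hf₀ hq.2, hxval]
    rwa [hfq] at hfqA
  · -- closed
    have hSclosed : IsClosed S := by
      rw [← closure_eq_iff_isClosed, Set.Subset.antisymm_iff]
      refine ⟨?_, subset_closure⟩
      intro p hp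
      obtain ⟨N, hN⟩ := exists_nat_gt (p : ℝ)
      set S₁ : Set ℚ := ⋃ n ∈ Set.Iio N, (fun q => q + t n) '' (Y ∩ D n) with hS₁
      set T : Set ℚ := Rat.cast ⁻¹' Set.Ici ((N : ℝ) + 1) with hT
      have hS₁closed : IsClosed S₁ := by
        apply Set.Finite.isClosed_biUnion (Set.finite_Iio N)
        intro n _
        exact (Homeomorph.addRight (t n)).isClosedMap _ (hYcl.inter (hDclosed n))
      have hTclosed : IsClosed T := isClosed_Ici.preimage Rat.continuous_coe_real
      have hsub : S ⊆ S₁ ∪ T := by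
        intro p' hp'
        obtain ⟨n, q, hq, rfl⟩ := hSrep hp'
        rcases Nat.lt_or_ge n N with h | h
        · exact Or.inl (Set.mem_iUnion₂.2 ⟨n, h, ⟨q, hq, rfl⟩⟩)
        · right
          have h1 := (htq hq.2).1
          have h2 : (N : ℝ) + 1 ≤ (n : ℝ) + 1 := by
            have h3 : (N : ℝ) ≤ (n : ℝ) := Nat.cast_le.2 h
            linarith
          show ((q + t n : ℚ) : ℝ) ∈ Set.Ici ((N : ℝ) + 1)
          exact Set.mem_Ici.2 (le_trans h2 (le_of_lt h1))
      have hmem := closure_mono hsub hp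
      rw [closure_union, hS₁closed.closure_eq, hTclosed.closure_eq] at hmem
      rcases hmem with h | h
      · obtain ⟨n, hn, hmem2⟩ := Set.mem_iUnion₂.1 h
        exact Set.mem_iUnion.2 ⟨n, hmem2⟩
      · exfalso
        have h5 : (N : ℝ) + 1 ≤ (p : ℝ) := h
        linarith
    exact hSclosed.preimage continuous_subtype_val
  · -- crowded
    intro x hx
    rw [closure_subtype]
    have hxS : (x : ℚ) ∈ S := hx
    obtain ⟨n, q, hq, hxval⟩ := hSrep hxS
    set e : ℚ ≃ₜ ℚ := Homeomorph.addRight (t n) with hedef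
    have he : ∀ a : ℚ, e a = a + t n := fun a => rfl
    have hq1 : q ∈ closure ((Y \ {q}) ∩ D n) :=
      mem_closure_inter' (hYcr q hq.1) (hDopen n) hq.2
    have h2 : e q ∈ closure (e '' ((Y \ {q}) ∩ D n)) := by
      rw [← Homeomorph.image_closure]
      exact Set.mem_image_of_mem _ hq1
    have h3 : e '' ((Y \ {q}) ∩ D n) ⊆ Subtype.val '' (X \ {x}) := by
      rintro p ⟨w, ⟨⟨hwY, hwne⟩, hwD⟩, rfl⟩
      have hwS : (w + t n : ℚ) ∈ S := by
        have h4 := hSf hwY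
        rwa [hf₀ hwD] at h4
      rw [he w]
      refine ⟨⟨w + t n, hSpos hwS⟩, ⟨hwS, ?_⟩, rfl⟩
      intro hcontra
      apply hwne
      have h5 : (w + t n : ℚ) = (x : ℚ) :=
        congrArg Subtype.val (Set.mem_singleton_iff.1 hcontra)
      rw [hxval] at h5
      have h6 : w = q := by linarith
      exact Set.mem_singleton_iff.2 h6
    have h4 := closure_mono h3 h2
    rw [he q, ← hxval] at h4
    exact h4
  · -- unbounded
    intro b
    obtain ⟨N, hN⟩ := exists_nat_gt (b : ℝ)
    obtain ⟨q, hqY, hqC⟩ := Ultrafilter.nonempty_of_mem (inter_mem hYu (hC N))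
    obtain ⟨k, hk⟩ := hYD hqY
    have hkN : (N : ℝ) ≤ (k : ℝ) := by
      by_contra hcon
      push_neg at hcon
      have h1 : k + 1 ≤ N := by
        have : k < N := by exact_mod_cast hcon
        omega
      have h2 : ((ε N : ℚ) : ℝ) ≤ ((ε (k + 1) : ℚ) : ℝ) := hεanti h1
      have h3 := hk.1
      have h4 := hqC.2
      linarith
    have h1 := (htq hk).1
    have hmem : f q ∈ X := hSf hqY
    refine ⟨f q, hmem, ?_⟩
    show b < f₀ q
    have h5 : (b : ℝ) < ((f₀ q : ℚ) : ℝ) := by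
      rw [hf₀ hk]
      push_cast at h1 ⊢
      linarith
    exact_mod_cast h5


lemma no_conv (u : Ultrafilter ℚ) (hnp : ∀ q : ℚ, u ≠ pure q)
    (hb : ∀ A ∈ u, ∃ X ∈ u, X ⊆ A ∧ IsClosed X ∧ CrowdedIn X)
    (q : ℚ) (hle : (u : Filter ℚ) ≤ 𝓝 q) : False := by
  have h1 : ({q} : Set ℚ) ∉ u := by
    intro h
    obtain ⟨x, hx, hux⟩ := Ultrafilter.eq_pure_of_finite_mem (Set.finite_singleton q) h
    rw [Set.mem_singleton_iff] at hx
    exact hnp q (hx ▸ hux)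
  have h2 : ({q}ᶜ : Set ℚ) ∈ u := Ultrafilter.compl_mem_iff_notMem.2 h1
  obtain ⟨X, hXu, hXsub, hXcl, -⟩ := hb _ h2
  have hq : q ∈ closure X := by
    rw [mem_closure_iff_nhds]
    intro s hs
    exact Ultrafilter.nonempty_of_mem (inter_mem (hle hs) hXu)
  exact (hXsub (hXcl.closure_subset hq)) rfl

/-- There exists a nonprincipal ultrafilter on ℚ with a base of perfect subsets
iff there exists an ultrafilter on ℚ⁺ with a base of perfect unbounded sets. -/
theorem stmt3 :
    (∃ u : Ultrafilter ℚ, (∀ q : ℚ, u ≠ pure q) ∧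
      ∀ A ∈ u, ∃ X ∈ u, X ⊆ A ∧ IsClosed X ∧ CrowdedIn X) ↔
    (∃ v : Ultrafilter Qpos,
      ∀ A ∈ v, ∃ X ∈ v, X ⊆ A ∧ IsClosed X ∧ CrowdedIn X ∧
        ∀ b : ℚ, ∃ x ∈ X, b < (x : ℚ)) := by
  constructor
  · rintro ⟨u, hnp, hb⟩
    by_cases ha : ∀ b : ℚ, {q : ℚ | b < q} ∈ u
    · exact main_inf u hb ha
    by_cases hbn : ∀ b : ℚ, {q : ℚ | q < b} ∈ u
    · apply main_inf (u.map (fun q : ℚ => -q)) (neg_base u hb)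
      intro b
      refine Ultrafilter.mem_map.2 ?_
      have heq : (fun q : ℚ => -q) ⁻¹' {q : ℚ | b < q} = {q : ℚ | q < -b} := by
        ext q
        simp only [Set.mem_preimage, Set.mem_setOf_eq]
        constructor <;> intro h <;> linarith
      rw [heq]
      exact hbn (-b)
    push_neg at ha hbn
    obtain ⟨b₁, hb₁⟩ := ha
    obtain ⟨b₂, hb₂⟩ := hbn
    have hc₁ : {q : ℚ | q ≤ b₁} ∈ u := by
      have h := Ultrafilter.compl_mem_iff_notMem.2 hb₁
      have heq : ({q : ℚ | b₁ < q}ᶜ : Set ℚ) = {q : ℚ | q ≤ b₁} := by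
        ext q; simp [not_lt]
      rwa [heq] at h
    have hc₂ : {q : ℚ | b₂ ≤ q} ∈ u := by
      have h := Ultrafilter.compl_mem_iff_notMem.2 hb₂
      have heq : ({q : ℚ | q < b₂}ᶜ : Set ℚ) = {q : ℚ | b₂ ≤ q} := by
        ext q; simp [not_lt]
      rwa [heq] at h
    have hK : Set.Icc ((b₂ : ℝ)) ((b₁ : ℝ)) ∈ u.map (Rat.cast : ℚ → ℝ) := by
      refine Ultrafilter.mem_map.2 (mem_of_superset (inter_mem hc₂ hc₁) ?_)
      intro q hq
      exact ⟨by exact_mod_cast hq.1, by exact_mod_cast hq.2⟩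
    obtain ⟨r, hrmem, hler⟩ := (isCompact_Icc).ultrafilter_le_nhds
        (u.map (Rat.cast : ℚ → ℝ)) (le_principal_iff.2 hK)
    have hirr : Irrational r := by
      rw [Irrational]
      intro hmem
      obtain ⟨c, hc⟩ := hmem
      have hnhds : (𝓝 c : Filter ℚ) = Filter.comap (Rat.cast : ℚ → ℝ) (𝓝 ((c : ℝ))) :=
        Rat.isEmbedding_coe_real.toIsInducing.nhds_eq_comap c
      have hle2 : (u : Filter ℚ) ≤ 𝓝 c := by
        rw [hnhds, ← Filter.map_le_iff_le_comap, hc]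
        exact hler
      exact no_conv u hnp hb c hle2
    have hball : ∀ ε : ℝ, 0 < ε → {q : ℚ | r - ε < (q : ℝ) ∧ (q : ℝ) < r + ε} ∈ u := by
      intro ε hε
      have h1 : Set.Ioo (r - ε) (r + ε) ∈ 𝓝 r := Ioo_mem_nhds (by linarith) (by linarith)
      have h2 : Set.Ioo (r - ε) (r + ε) ∈ u.map (Rat.cast : ℚ → ℝ) := hler h1
      exact Ultrafilter.mem_map.1 h2
    rcases u.mem_or_compl_mem {q : ℚ | r < (q : ℝ)} with hside | hside
    · apply main_irr u r hirr hb
      intro ε hε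
      refine mem_of_superset (inter_mem hside (hball ε hε)) ?_
      rintro q ⟨h1, h2⟩
      exact ⟨h1, h2.2⟩
    · have hlt : {q : ℚ | (q : ℝ) < r} ∈ u := by
        refine mem_of_superset hside ?_
        intro q hq
        have h1 : ¬ r < (q : ℝ) := hq
        rcases lt_or_eq_of_le (not_lt.1 h1) with h | h
        · exact h
        · exact absurd h.symm (hirr.ne_rat q)
      apply main_irr (u.map (fun q : ℚ => -q)) (-r) hirr.neg (neg_base u hb)
      intro ε hε
      refine Ultrafilter.mem_map.2 ?_
      have heq : (fun q : ℚ => -q) ⁻¹' {q : ℚ | -r < (q : ℝ) ∧ (q : ℝ) < -r + ε}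
          = {q : ℚ | r - ε < (q : ℝ) ∧ (q : ℝ) < r} := by
        ext q
        simp only [Set.mem_preimage, Set.mem_setOf_eq]
        push_cast
        constructor <;> rintro ⟨h1, h2⟩ <;> constructor <;> linarith
      rw [heq]
      refine mem_of_superset (inter_mem hlt (hball ε hε)) ?_
      rintro q ⟨h1, h2⟩
      exact ⟨h2.1, h1⟩
  · rintro ⟨v, hv⟩
    exact backward_dir v hv
end

section
/- If u is an ultrafilter on ℚ that contains a bounded set and has a base of perfect sets, then there exist a real number r and an order-isomorphism or order anti-isomorphism f from a rational interval with endpoint r onto ℚ⁺ such that the image ultrafilter f(u) has a base of perfect unbounded subsets of ℚ⁺. -/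
/-- The set of positive rationals. -/
def QposSet : Set ℚ := {q : ℚ | 0 < q}

/-- `S` is closed in ℚ⁺ (with its subspace topology). -/
def ClosedInPos (S : Set ℚ) : Prop :=
  ∃ C : Set ℚ, IsClosed C ∧ S = C ∩ QposSet

lemma push_lemma (u : Ultrafilter ℚ)
    (hbase : ∀ A ∈ u, ∃ X ∈ u, X ⊆ A ∧ IsClosed X ∧ CrowdedIn X)
    (I : Set ℚ) (hIu : I ∈ u)
    (f : ℚ → ℚ)
    (h : ↥I ≃ₜ ↥QposSet) (hf : ∀ x : ↥I, (h x : ℚ) = f x)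
    (hub : ∀ b : ℚ, {q | q ∈ I ∧ b < f q} ∈ u) :
    ∀ A ∈ Ultrafilter.map f u, ∃ X ∈ Ultrafilter.map f u,
        X ⊆ A ∧ X ⊆ QposSet ∧ ClosedInPos X ∧ CrowdedIn X ∧
          ∀ b : ℚ, ∃ x ∈ X, b < x := by
  intro A hA
  rw [Ultrafilter.mem_map] at hA
  obtain ⟨X, hXu, hXB, hXcl, hXcr⟩ := hbase (f ⁻¹' A ∩ I) (Filter.inter_mem hA hIu)
  have hXI : X ⊆ I := fun x hx => (hXB hx).2
  have hXA : X ⊆ f ⁻¹' A := fun x hx => (hXB hx).1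
  set Y := f '' X with hY
  have hfx : ∀ x (hx : x ∈ X), f x ∈ QposSet := fun x hx => by
    rw [← hf ⟨x, hXI hx⟩]; exact (h ⟨x, hXI hx⟩).2
  refine ⟨Y, ?_, ?_, ?_, ?_, ?_, ?_⟩
  · rw [Ultrafilter.mem_map]
    exact Filter.mem_of_superset hXu (Set.subset_preimage_image f X)
  · exact fun y ⟨x, hx, hxy⟩ => hxy ▸ hXA hx
  · rintro y ⟨x, hx, rfl⟩; exact hfx x hx
  · -- ClosedInPos
    set s : Set ↥I := Subtype.val ⁻¹' X with hs
    have hscl : IsClosed s := hXcl.preimage continuous_subtype_val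
    have : IsClosed (h '' s) := (h.isClosed_image).2 hscl
    rw [isClosed_induced_iff] at this
    obtain ⟨C, hCcl, hC⟩ := this
    refine ⟨C, hCcl, Set.Subset.antisymm ?_ ?_⟩
    · rintro y ⟨x, hx, rfl⟩
      have : h ⟨x, hXI hx⟩ ∈ h '' s := ⟨⟨x, hXI hx⟩, hx, rfl⟩
      rw [← hC] at this
      refine ⟨?_, hfx x hx⟩
      rw [← hf ⟨x, hXI hx⟩]
      exact this
    · rintro c ⟨hc1, hc2⟩
      have : (⟨c, hc2⟩ : ↥QposSet) ∈ h '' s := by rw [← hC]; exact hc1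
      obtain ⟨z, hz, hzc⟩ := this
      refine ⟨(z : ℚ), hz, ?_⟩
      rw [← hf z, hzc]
  · -- Crowded
    rintro y ⟨x, hx, rfl⟩
    set s' : Set ↥I := Subtype.val ⁻¹' (X \ {x}) with hs'
    have hxcl : (⟨x, hXI hx⟩ : ↥I) ∈ closure s' := by
      rw [closure_subtype]
      have : Subtype.val '' s' = X \ {x} := by
        rw [Subtype.image_preimage_coe]
        exact Set.inter_eq_self_of_subset_right (fun z hz => hXI hz.1)
      rw [this]
      exact hXcr x hx
    have h2 : h ⟨x, hXI hx⟩ ∈ closure (h '' s') := by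
      rw [← h.image_closure]; exact ⟨_, hxcl, rfl⟩
    rw [closure_subtype] at h2
    have himg : Subtype.val '' (h '' s') = Y \ {f x} := by
      ext w
      constructor
      · rintro ⟨_, ⟨z, hz, rfl⟩, rfl⟩
        refine ⟨⟨z, hz.1, (hf z).symm⟩, ?_⟩
        simp only [Set.mem_singleton_iff]
        intro hw
        apply hz.2
        have hzz : h z = h ⟨x, hXI hx⟩ := Subtype.ext (by rw [hw, hf])
        have h3 := h.injective hzz
        show (z : ℚ) ∈ ({x} : Set ℚ)
        rw [Set.mem_singleton_iff]
        exact congrArg Subtype.val h3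
      · rintro ⟨⟨x', hx', rfl⟩, hne⟩
        have hxx : x' ≠ x := fun hh => hne (hh ▸ rfl)
        refine ⟨h ⟨x', hXI hx'⟩, ⟨⟨x', hXI hx'⟩, ⟨hx', ?_⟩, rfl⟩, hf _⟩
        simp only [Set.mem_singleton_iff, Subtype.mk.injEq]
        exact hxx
    rw [himg] at h2
    rwa [hf] at h2
  · intro b
    have hmem := Filter.inter_mem (hub b) hXu
    obtain ⟨q, ⟨⟨hqI, hqb⟩, hqX⟩⟩ := Ultrafilter.nonempty_of_mem hmem
    exact ⟨f q, ⟨q, hqX, rfl⟩, hqb⟩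

def dualHomeo {α : Type*} [TopologicalSpace α] : αᵒᵈ ≃ₜ α :=
  { toEquiv := OrderDual.ofDual, continuous_toFun := continuous_id,
    continuous_invFun := continuous_id }

lemma qpos_inst : Set.OrdConnected QposSet := Set.ordConnected_Ioi

lemma qpos_nomin : NoMinOrder ↥QposSet :=
  ⟨fun x => by
    obtain ⟨q, h1, h2⟩ := exists_between (show (0:ℚ) < (x:ℚ) from x.2)
    exact ⟨⟨q, h1⟩, Subtype.coe_lt_coe.1 h2⟩⟩

lemma qpos_nomax : NoMaxOrder ↥QposSet :=
  ⟨fun x => by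
    refine ⟨⟨(x : ℚ) + 1, show (0:ℚ) < (x:ℚ) + 1 from lt_trans (show (0:ℚ) < (x:ℚ) from x.2) (lt_add_one _)⟩, ?_⟩
    exact Subtype.coe_lt_coe.1 (lt_add_one (x : ℚ))⟩


/-- If an ultrafilter on ℚ contains a bounded set and has a base of perfect sets,
then there are a real `r` and an order-(anti-)isomorphism `f` from a rational
interval with endpoint `r` onto ℚ⁺ such that `f(u)` has a base of perfect
unbounded subsets of ℚ⁺. -/
theorem stmt4 (u : Ultrafilter ℚ)
    (hbdd : ∃ A ∈ u, ∃ a b : ℚ, A ⊆ Set.Icc a b)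
    (hbase : ∀ A ∈ u, ∃ X ∈ u, X ⊆ A ∧ IsClosed X ∧ CrowdedIn X) :
    ∃ (r : ℝ) (I : Set ℚ) (f : ℚ → ℚ),
      ((∃ a : ℝ, a < r ∧ I = {q : ℚ | a < (q : ℝ) ∧ (q : ℝ) < r}) ∨
        I = {q : ℚ | r < (q : ℝ)}) ∧
      I ∈ u ∧
      Set.BijOn f I QposSet ∧
      (StrictMonoOn f I ∨ StrictAntiOn f I) ∧
      (∀ A ∈ Ultrafilter.map f u, ∃ X ∈ Ultrafilter.map f u,
        X ⊆ A ∧ X ⊆ QposSet ∧ ClosedInPos X ∧ CrowdedIn X ∧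
          ∀ b : ℚ, ∃ x ∈ X, b < x) := by
  classical
  obtain ⟨A, hAu, a, b, hAab⟩ := hbdd
  -- convergence to a real r
  have hIcc : (u : Filter ℚ) ≤ Filter.principal ((fun q : ℚ => (q : ℝ)) ⁻¹' Set.Icc (a : ℝ) (b : ℝ)) := by
    rw [Filter.le_principal_iff]
    refine Filter.mem_of_superset hAu fun q hq => ?_
    obtain ⟨h1, h2⟩ := hAab hq
    exact ⟨show (a:ℝ) ≤ (q:ℝ) by exact_mod_cast h1, show (q:ℝ) ≤ (b:ℝ) by exact_mod_cast h2⟩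
  have hle : (Ultrafilter.map (fun q : ℚ => (q : ℝ)) u : Filter ℝ) ≤
      Filter.principal (Set.Icc (a : ℝ) (b : ℝ)) := by
    rw [Ultrafilter.coe_map, Filter.le_principal_iff, Filter.mem_map]
    exact Filter.le_principal_iff.1 hIcc
  obtain ⟨r, _, hr⟩ := (isCompact_Icc (a := (a : ℝ)) (b := (b : ℝ))).ultrafilter_le_nhds _ hle
  have htendsto : Filter.Tendsto (fun q : ℚ => (q : ℝ)) (u : Filter ℚ) (nhds r) := hr
  -- the ultrafilter is not principal at a rational equal to r
  have hne : {q : ℚ | (q : ℝ) = r} ∉ u := by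
    intro hmem
    obtain ⟨r0, hr0⟩ := Ultrafilter.nonempty_of_mem hmem
    have hsub : {q : ℚ | (q : ℝ) = r} ⊆ {r0} := fun q hq => by
      have : (q : ℝ) = (r0 : ℝ) := by rw [hq, hr0]
      exact_mod_cast this
    obtain ⟨X, hXu, hXs, _, hXcr⟩ := hbase {r0} (Filter.mem_of_superset hmem hsub)
    obtain ⟨x, hx⟩ := Ultrafilter.nonempty_of_mem hXu
    have hd : X \ {x} = ∅ := by
      ext z
      simp only [Set.mem_diff, Set.mem_singleton_iff, Set.mem_empty_iff_false, iff_false]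
      rintro ⟨hz, hzx⟩
      exact hzx ((hXs hz).trans (hXs hx).symm)
    have := hXcr x hx
    rw [hd, closure_empty] at this
    exact this
  haveI : Set.OrdConnected QposSet := qpos_inst
  haveI := qpos_nomin
  haveI := qpos_nomax
  haveI : Nonempty ↥QposSet := ⟨⟨1, show (0:ℚ) < 1 from one_pos⟩⟩
  rcases u.mem_or_compl_mem {q : ℚ | (q : ℝ) < r} with hlt | hge
  · -- left case : I = (r-1, r)
    set I : Set ℚ := {q : ℚ | r - 1 < (q : ℝ) ∧ (q : ℝ) < r} with hIdef
    have hIu : I ∈ u := by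
      have h1 : {q : ℚ | r - 1 < (q : ℝ)} ∈ u :=
        htendsto (Ioi_mem_nhds (by linarith))
      exact Filter.inter_mem h1 hlt
    haveI : Set.OrdConnected I := by
      constructor
      rintro x ⟨hx1, hx2⟩ y ⟨hy1, hy2⟩ z ⟨hz1, hz2⟩
      have c1 : (x : ℝ) ≤ (z : ℝ) := by exact_mod_cast hz1
      have c2 : (z : ℝ) ≤ (y : ℝ) := by exact_mod_cast hz2
      exact ⟨lt_of_lt_of_le hx1 c1, lt_of_le_of_lt c2 hy2⟩
    haveI : NoMinOrder ↥I := by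
      constructor
      intro x
      obtain ⟨q, hq1, hq2⟩ := exists_rat_btwn x.2.1
      refine ⟨⟨q, hq1, lt_trans hq2 x.2.2⟩, Subtype.coe_lt_coe.1 ?_⟩
      exact_mod_cast hq2
    haveI : NoMaxOrder ↥I := by
      constructor
      intro x
      obtain ⟨q, hq1, hq2⟩ := exists_rat_btwn x.2.2
      refine ⟨⟨q, lt_trans x.2.1 hq1, hq2⟩, Subtype.coe_lt_coe.1 ?_⟩
      exact_mod_cast hq1
    haveI : Nonempty ↥I := (Ultrafilter.nonempty_of_mem hIu).to_subtype
    obtain ⟨F⟩ := Order.iso_of_countable_dense ↥I ↥QposSet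
    set f : ℚ → ℚ := fun q => if h : q ∈ I then (F ⟨q, h⟩ : ℚ) else 0 with hfdef
    have hfval : ∀ (q : ℚ) (h : q ∈ I), f q = (F ⟨q, h⟩ : ℚ) := fun q h => dif_pos h
    have hmono : StrictMonoOn f I := by
      intro q1 hq1 q2 hq2 hlt12
      rw [hfval q1 hq1, hfval q2 hq2]
      exact Subtype.coe_lt_coe.2 (F.lt_iff_lt.2 (Subtype.mk_lt_mk.2 hlt12))
    have hbij : Set.BijOn f I QposSet := by
      refine ⟨fun q hq => ?_, fun q1 hq1 q2 hq2 heq => ?_, fun p hp => ?_⟩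
      · rw [hfval q hq]; exact (F ⟨q, hq⟩).2
      · rw [hfval q1 hq1, hfval q2 hq2] at heq
        have := F.injective (Subtype.ext heq)
        exact congrArg Subtype.val this
      · refine ⟨(F.symm ⟨p, hp⟩ : ℚ), (F.symm ⟨p, hp⟩).2, ?_⟩
        rw [hfval _ (F.symm ⟨p, hp⟩).2]
        simp
    have hf : ∀ x : ↥I, ((F.toHomeomorph x : ↥QposSet) : ℚ) = f (x : ℚ) := by
      intro x
      rw [hfval _ x.2]
      simp
    have hub : ∀ c : ℚ, {q | q ∈ I ∧ c < f q} ∈ u := by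
      intro c
      set p1 : ℚ := max c 0 + 1 with hp1def
      have hp1pos : p1 ∈ QposSet := lt_of_le_of_lt (le_max_right c 0) (lt_add_one _)
      have hcp1 : c < p1 := lt_of_le_of_lt (le_max_left c 0) (lt_add_one _)
      set x1 : ↥I := F.symm ⟨p1, hp1pos⟩ with hx1def
      have hmem : I ∩ {q : ℚ | ((x1 : ℚ) : ℝ) < (q : ℝ)} ∈ u :=
        Filter.inter_mem hIu (htendsto (Ioi_mem_nhds x1.2.2))
      refine Filter.mem_of_superset hmem ?_
      rintro q ⟨hqI, hqx⟩
      have hlt' : (x1 : ℚ) < q := by exact_mod_cast hqx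
      have : p1 < f q := by
        rw [hfval q hqI]
        have : F x1 < F ⟨q, hqI⟩ := F.lt_iff_lt.2 (Subtype.mk_lt_mk.2 hlt')
        rw [hx1def, F.apply_symm_apply] at this
        exact Subtype.coe_lt_coe.2 this
      exact ⟨hqI, lt_trans hcp1 this⟩
    exact ⟨r, I, f, Or.inl ⟨r - 1, by linarith, rfl⟩, hIu, hbij, Or.inl hmono,
      push_lemma u hbase I hIu f F.toHomeomorph hf hub⟩
  · -- right case : I = (r, ∞)
    set I : Set ℚ := {q : ℚ | r < (q : ℝ)} with hIdef
    have hIu : I ∈ u := by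
      have h1 : {q : ℚ | (q : ℝ) = r}ᶜ ∈ u := (Ultrafilter.compl_mem_iff_notMem).2 hne
      refine Filter.mem_of_superset (Filter.inter_mem hge h1) ?_
      rintro q ⟨hq1, hq2⟩
      simp only [Set.mem_compl_iff, Set.mem_setOf_eq] at hq1 hq2
      exact lt_of_le_of_ne (not_lt.1 hq1) (Ne.symm hq2)
    haveI : Set.OrdConnected I := by
      constructor
      rintro x hx y _ z ⟨hz1, _⟩
      have c1 : (x : ℝ) ≤ (z : ℝ) := by exact_mod_cast hz1
      exact lt_of_lt_of_le hx c1
    haveI : NoMinOrder ↥I := by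
      constructor
      intro x
      obtain ⟨q, hq1, hq2⟩ := exists_rat_btwn (show r < ((x : ℚ) : ℝ) from x.2)
      refine ⟨⟨q, hq1⟩, Subtype.coe_lt_coe.1 ?_⟩
      exact_mod_cast hq2
    haveI : NoMaxOrder ↥I := by
      constructor
      intro x
      have hx1 : r < (((x : ℚ) + 1 : ℚ) : ℝ) := by
        have h0 : r < ((x : ℚ) : ℝ) := x.2
        push_cast
        linarith
      exact ⟨⟨(x : ℚ) + 1, hx1⟩, Subtype.coe_lt_coe.1 (lt_add_one (x : ℚ))⟩
    haveI : Nonempty ↥I := (Ultrafilter.nonempty_of_mem hIu).to_subtype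
    haveI : Countable (↥QposSet)ᵒᵈ := inferInstanceAs (Countable ↥QposSet)
    haveI : Nonempty (↥QposSet)ᵒᵈ := inferInstanceAs (Nonempty ↥QposSet)
    obtain ⟨F⟩ := Order.iso_of_countable_dense ↥I (↥QposSet)ᵒᵈ
    set f : ℚ → ℚ := fun q =>
      if h : q ∈ I then ((OrderDual.ofDual (F ⟨q, h⟩) : ↥QposSet) : ℚ) else 0 with hfdef
    have hfval : ∀ (q : ℚ) (h : q ∈ I),
        f q = ((OrderDual.ofDual (F ⟨q, h⟩) : ↥QposSet) : ℚ) := fun q h => dif_pos h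
    have hanti : StrictAntiOn f I := by
      intro q1 hq1 q2 hq2 hlt12
      rw [hfval q1 hq1, hfval q2 hq2]
      have : F ⟨q1, hq1⟩ < F ⟨q2, hq2⟩ := F.lt_iff_lt.2 (Subtype.mk_lt_mk.2 hlt12)
      exact Subtype.coe_lt_coe.2 this
    have hbij : Set.BijOn f I QposSet := by
      refine ⟨fun q hq => ?_, fun q1 hq1 q2 hq2 heq => ?_, fun p hp => ?_⟩
      · rw [hfval q hq]; exact (OrderDual.ofDual (F ⟨q, hq⟩)).2
      · rw [hfval q1 hq1, hfval q2 hq2] at heq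
        have h0 : F ⟨q1, hq1⟩ = F ⟨q2, hq2⟩ := Subtype.ext heq
        have := F.injective h0
        exact congrArg Subtype.val this
      · refine ⟨(F.symm (OrderDual.toDual ⟨p, hp⟩) : ℚ),
          (F.symm (OrderDual.toDual ⟨p, hp⟩)).2, ?_⟩
        rw [hfval _ (F.symm (OrderDual.toDual ⟨p, hp⟩)).2]
        simp
    have hf : ∀ x : ↥I, (((F.toHomeomorph.trans dualHomeo) x : ↥QposSet) : ℚ) = f (x : ℚ) := by
      intro x
      rw [hfval _ x.2]
      rfl
    have hub : ∀ c : ℚ, {q | q ∈ I ∧ c < f q} ∈ u := by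
      intro c
      set p1 : ℚ := max c 0 + 1 with hp1def
      have hp1pos : p1 ∈ QposSet := lt_of_le_of_lt (le_max_right c 0) (lt_add_one _)
      have hcp1 : c < p1 := lt_of_le_of_lt (le_max_left c 0) (lt_add_one _)
      set x1 : ↥I := F.symm (OrderDual.toDual ⟨p1, hp1pos⟩) with hx1def
      have hmem : I ∩ {q : ℚ | (q : ℝ) < ((x1 : ℚ) : ℝ)} ∈ u :=
        Filter.inter_mem hIu (htendsto (Iio_mem_nhds (show r < ((x1 : ℚ) : ℝ) from x1.2)))
      refine Filter.mem_of_superset hmem ?_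
      rintro q ⟨hqI, hqx⟩
      have hlt' : q < (x1 : ℚ) := by exact_mod_cast hqx
      have : p1 < f q := by
        rw [hfval q hqI]
        have h1 : F ⟨q, hqI⟩ < F x1 := F.lt_iff_lt.2 (Subtype.mk_lt_mk.2 hlt')
        rw [hx1def, F.apply_symm_apply] at h1
        exact Subtype.coe_lt_coe.2 (OrderDual.ofDual_lt_ofDual.2 h1)
      exact ⟨hqI, lt_trans hcp1 this⟩
    exact ⟨r, I, f, Or.inr rfl, hIu, hbij, Or.inr hanti,
      push_lemma u hbase I hIu f (F.toHomeomorph.trans dualHomeo) hf hub⟩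
end

section
/- The cardinal invariant 𝔯_P is at least the reaping number 𝔯: every reaping family for 𝒫(ℚ)/(scattered×fin) built from perfect sets yields, by intersecting with a countable clopen basis, a reaping family of the same cardinality for 𝒫(ω)/fin. Hence 𝔯 ≤ 𝔯_P. -/
/-- `S` is two-sided crowded: every point of `S` is a two-sided limit of points of `S`. -/
def TwoSidedCrowded (S : Set ℚ) : Prop :=
  ∀ x ∈ S, ∀ ε : ℚ, 0 < ε →
    (∃ y ∈ S, x - ε < y ∧ y < x) ∧ (∃ z ∈ S, x < z ∧ z < x + ε)

/-- `S` is unbounded above. -/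
def UnbAbove (S : Set ℚ) : Prop := ∀ b : ℚ, ∃ x ∈ S, b < x

/-- The family ℬ of unbounded two-sided perfect subsets of ℚ⁺. -/
def Bfam : Set (Set ℚ) :=
  {S | S ⊆ QposSet ∧ ClosedInPos S ∧ TwoSidedCrowded S ∧ UnbAbove S}

/-- Membership in the coideal 𝒫′ generated by ℬ. -/
def MemPprime (A : Set ℚ) : Prop := ∃ B ∈ Bfam, B ⊆ A

/-- The cardinal invariant 𝔯_P: the least size of a family of unbounded
two-sided perfect subsets of ℚ⁺ reaping every `A ⊆ ℚ⁺` modulo 𝒫′. -/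
noncomputable def rP : Cardinal :=
  sInf {c : Cardinal | ∃ 𝒳 : Set (Set ℚ), Cardinal.mk 𝒳 = c ∧ 𝒳 ⊆ Bfam ∧
    ∀ A : Set ℚ, ∃ X ∈ 𝒳, ¬ MemPprime (X \ A) ∨ ¬ MemPprime (X ∩ A)}

/-- The reaping number 𝔯. -/
noncomputable def reapNumber : Cardinal :=
  sInf {c : Cardinal | ∃ R : Set (Set ℕ), Cardinal.mk R = c ∧
    (∀ A ∈ R, A.Infinite) ∧
    ∀ Y : Set ℕ, ∃ A ∈ R, (A \ Y).Finite ∨ (A ∩ Y).Finite}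

section AuxStmt13

noncomputable def sIr : ℝ := Real.sqrt 2 / 2

lemma sIr_pos : 0 < sIr := by unfold sIr; positivity

lemma sIr_irr : Irrational sIr := by
  have := irrational_sqrt_two.div_natCast (m := 2) (by norm_num)
  simpa [sIr] using this

lemma nsIr_ne (n : ℕ) (hn : n ≠ 0) (q : ℚ) : (n:ℝ) * sIr ≠ (q:ℝ) :=
  (sIr_irr.natCast_mul hn).ne_rat q

def Iset (n : ℕ) : Set ℚ := {q : ℚ | (n:ℝ) * sIr < (q:ℝ) ∧ (q:ℝ) < ((n:ℝ)+1) * sIr}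

lemma Iset_exists {q : ℚ} (hq : 0 < q) : ∃ n : ℕ, q ∈ Iset n := by
  have hq' : (0:ℝ) < (q:ℝ) := by exact_mod_cast hq
  set n : ℕ := (⌊(q:ℝ)/sIr⌋).toNat with hn
  have hpos : (0:ℝ) < (q:ℝ)/sIr := div_pos hq' sIr_pos
  have h0 : (0:ℤ) ≤ ⌊(q:ℝ)/sIr⌋ := Int.floor_nonneg.2 hpos.le
  have hcast : ((n:ℤ)) = ⌊(q:ℝ)/sIr⌋ := Int.toNat_of_nonneg h0
  have hle : (n:ℝ) ≤ (q:ℝ)/sIr := by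
    have := Int.floor_le ((q:ℝ)/sIr)
    rw [← hcast] at this; exact_mod_cast this
  have hlt : (q:ℝ)/sIr < (n:ℝ) + 1 := by
    have := Int.lt_floor_add_one ((q:ℝ)/sIr)
    rw [← hcast] at this; exact_mod_cast this
  refine ⟨n, ?_, ?_⟩
  · have h1 : (n:ℝ) * sIr ≤ q := by
      have := mul_le_mul_of_nonneg_right hle sIr_pos.le
      rwa [div_mul_cancel₀ _ sIr_pos.ne'] at this
    rcases eq_or_lt_of_le h1 with h | h
    · exfalso
      rcases Nat.eq_zero_or_pos n with h0' | h0'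
      · rw [h0'] at h; simp at h; exact absurd h.symm hq'.ne'
      · exact nsIr_ne n h0'.ne' q h
    · exact h
  · have := mul_lt_mul_of_pos_right hlt sIr_pos
    rwa [div_mul_cancel₀ _ sIr_pos.ne'] at this

lemma Iset_unique {q : ℚ} {n m : ℕ} (hn : q ∈ Iset n) (hm : q ∈ Iset m) : n = m := by
  have h1 : (n:ℝ) * sIr < ((m:ℝ)+1) * sIr := lt_trans hn.1 hm.2
  have h2 : (m:ℝ) * sIr < ((n:ℝ)+1) * sIr := lt_trans hm.1 hn.2
  have h1' : (n:ℝ) < (m:ℝ)+1 := lt_of_mul_lt_mul_right h1 sIr_pos.le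
  have h2' : (m:ℝ) < (n:ℝ)+1 := lt_of_mul_lt_mul_right h2 sIr_pos.le
  have e1 : n < m + 1 := by exact_mod_cast h1'
  have e2 : m < n + 1 := by exact_mod_cast h2'
  omega

lemma Iset_pos {q : ℚ} {n : ℕ} (h : q ∈ Iset n) : 0 < q := by
  have h0 : (0:ℝ) ≤ (n:ℝ) * sIr := mul_nonneg (Nat.cast_nonneg n) sIr_pos.le
  have : (0:ℝ) < (q:ℝ) := lt_of_le_of_lt h0 h.1
  exact_mod_cast this

def USet (S : Set ℕ) : Set ℚ := {q | ∃ n ∈ S, q ∈ Iset n}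

def DSet (S : Set ℕ) : Set ℚ := {q : ℚ | ∃ n ∈ S, (n:ℝ) * sIr ≤ (q:ℝ) ∧ (q:ℝ) ≤ ((n:ℝ)+1) * sIr}

lemma DSet_closed (S : Set ℕ) : IsClosed (DSet S) := by
  rw [← isOpen_compl_iff]
  rw [Metric.isOpen_iff]
  intro q hq
  simp only [Set.mem_compl_iff, DSet, Set.mem_setOf_eq, not_exists, not_and] at hq
  by_cases hq0 : (q:ℝ) < 0
  · refine ⟨-(q:ℝ), by linarith, ?_⟩
    intro p hp
    rw [Metric.mem_ball, ← Rat.dist_cast, Real.dist_eq] at hp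
    have hpq : (p:ℝ) < 0 := by
      have := abs_lt.1 hp
      linarith [this.1]
    simp only [Set.mem_compl_iff, DSet, Set.mem_setOf_eq, not_exists, not_and]
    intro n hn h1
    exfalso
    have : (0:ℝ) ≤ (n:ℝ)*sIr := mul_nonneg (Nat.cast_nonneg n) sIr_pos.le
    linarith
  · push_neg at hq0
    set m : ℕ := (⌊(q:ℝ)/sIr⌋).toNat with hm
    have hpos : (0:ℝ) ≤ (q:ℝ)/sIr := div_nonneg hq0 sIr_pos.le
    have hcast : ((m:ℤ)) = ⌊(q:ℝ)/sIr⌋ := Int.toNat_of_nonneg (Int.floor_nonneg.2 hpos)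
    have hle : (m:ℝ) * sIr ≤ (q:ℝ) := by
      have h := Int.floor_le ((q:ℝ)/sIr)
      rw [← hcast] at h
      have h' : (m:ℝ) ≤ (q:ℝ)/sIr := by exact_mod_cast h
      have := mul_le_mul_of_nonneg_right h' sIr_pos.le
      rwa [div_mul_cancel₀ _ sIr_pos.ne'] at this
    have hlt : (q:ℝ) < ((m:ℝ)+1) * sIr := by
      have h := Int.lt_floor_add_one ((q:ℝ)/sIr)
      rw [← hcast] at h
      have h' : (q:ℝ)/sIr < (m:ℝ)+1 := by exact_mod_cast h
      have := mul_lt_mul_of_pos_right h' sIr_pos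
      rwa [div_mul_cancel₀ _ sIr_pos.ne'] at this
    rcases eq_or_lt_of_le hle with heq | hlt2
    · have hmS : m ∉ S := by
        intro hmem
        exact hq m hmem (le_of_eq heq) (le_of_lt hlt)
      refine ⟨sIr, sIr_pos, ?_⟩
      intro p hp
      rw [Metric.mem_ball, ← Rat.dist_cast, Real.dist_eq] at hp
      have habs := abs_lt.1 hp
      simp only [Set.mem_compl_iff, DSet, Set.mem_setOf_eq, not_exists, not_and]
      intro n hn h1 h2
      have hup : (p:ℝ) < ((m:ℝ)+1)*sIr := by nlinarith [habs.2]
      have hdn : ((m:ℝ)-1)*sIr < (p:ℝ) := by nlinarith [habs.1]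
      have hn1 : (n:ℝ) < (m:ℝ)+1 := by
        by_contra hc
        push_neg at hc
        have := mul_le_mul_of_nonneg_right hc sIr_pos.le
        linarith
      have hn2 : (m:ℝ)-1 < (n:ℝ)+1 := by
        by_contra hc
        push_neg at hc
        have := mul_le_mul_of_nonneg_right hc sIr_pos.le
        linarith
      have e1 : n < m+1 := by exact_mod_cast hn1
      have e2 : (m:ℤ) - 1 < (n:ℤ)+1 := by exact_mod_cast hn2
      have hcase : n = m ∨ n = m - 1 := by omega
      rcases hcase with h|h
      · exact hmS (h ▸ hn)
      · rcases Nat.eq_zero_or_pos m with hm0 | hm0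
        · rw [hm0] at h; simp at h; rw [hm0] at hmS; exact hmS (h ▸ hn)
        · exact nsIr_ne m hm0.ne' q heq
    · have hmS : m ∉ S := fun hmem => hq m hmem hle (le_of_lt hlt)
      refine ⟨min ((q:ℝ) - (m:ℝ)*sIr) (((m:ℝ)+1)*sIr - (q:ℝ)), by
        apply lt_min <;> linarith, ?_⟩
      intro p hp
      rw [Metric.mem_ball, ← Rat.dist_cast, Real.dist_eq] at hp
      have habs := abs_lt.1 hp
      have hmin1 : min ((q:ℝ) - (m:ℝ)*sIr) (((m:ℝ)+1)*sIr - (q:ℝ)) ≤ (q:ℝ) - (m:ℝ)*sIr := min_le_left _ _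
      have hmin2 : min ((q:ℝ) - (m:ℝ)*sIr) (((m:ℝ)+1)*sIr - (q:ℝ)) ≤ ((m:ℝ)+1)*sIr - (q:ℝ) := min_le_right _ _
      have hp1 : (m:ℝ)*sIr < (p:ℝ) := by linarith [habs.1]
      have hp2 : (p:ℝ) < ((m:ℝ)+1)*sIr := by linarith [habs.2]
      simp only [Set.mem_compl_iff, DSet, Set.mem_setOf_eq, not_exists, not_and]
      intro n hn h1 h2
      have hn1 : (n:ℝ) < (m:ℝ)+1 := by
        by_contra hc; push_neg at hc
        have := mul_le_mul_of_nonneg_right hc sIr_pos.le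
        linarith
      have hn2 : (m:ℝ) < (n:ℝ)+1 := by
        by_contra hc; push_neg at hc
        have := mul_le_mul_of_nonneg_right hc sIr_pos.le
        linarith
      have e1 : n < m+1 := by exact_mod_cast hn1
      have e2 : m < n+1 := by exact_mod_cast hn2
      have : n = m := by omega
      exact hmS (this ▸ hn)

/-- The trace of X on intervals indexed by S is in Bfam, provided infinitely
many pieces from S are nonempty. -/
lemma inter_USet_mem_Bfam {X : Set ℚ} (hX : X ∈ Bfam) {S : Set ℕ}
    (hT : {n | n ∈ S ∧ (X ∩ Iset n).Nonempty}.Infinite) :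
    X ∩ USet S ∈ Bfam := by
  obtain ⟨hXpos, ⟨C, hC, hCX⟩, hXcr, hXun⟩ := hX
  refine ⟨fun q hq => hXpos hq.1, ?_, ?_, ?_⟩
  · -- ClosedInPos
    refine ⟨C ∩ DSet S, hC.inter (DSet_closed S), ?_⟩
    ext q
    constructor
    · rintro ⟨hqX, n, hnS, hqI⟩
      have hq0 : 0 < q := Iset_pos hqI
      have hqC : q ∈ C := by
        rw [hCX] at hqX; exact hqX.1
      exact ⟨⟨hqC, n, hnS, hqI.1.le, hqI.2.le⟩, hq0⟩
    · rintro ⟨⟨hqC, n, hnS, h1, h2⟩, hq0⟩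
      have hq0' : (0:ℝ) < (q:ℝ) := by exact_mod_cast hq0
      have hs1 : (n:ℝ) * sIr < (q:ℝ) := by
        rcases eq_or_lt_of_le h1 with h | h
        · exfalso
          rcases Nat.eq_zero_or_pos n with h0' | h0'
          · rw [h0'] at h; simp at h; exact absurd h.symm hq0'.ne'
          · exact nsIr_ne n h0'.ne' q h
        · exact h
      have hs2 : (q:ℝ) < ((n:ℝ)+1) * sIr := by
        rcases eq_or_lt_of_le h2 with h | h
        · exfalso
          have : ((n+1:ℕ):ℝ) * sIr = (q:ℝ) := by push_cast; linarith
          exact nsIr_ne (n+1) (Nat.succ_ne_zero n) q this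
        · exact h
      refine ⟨?_, n, hnS, hs1, hs2⟩
      rw [hCX]; exact ⟨hqC, hq0⟩
  · -- TwoSidedCrowded
    rintro x ⟨hxX, n, hnS, hxI⟩ ε hε
    have hδ1 : (0:ℝ) < (x:ℝ) - (n:ℝ)*sIr := by linarith [hxI.1]
    have hδ2 : (0:ℝ) < ((n:ℝ)+1)*sIr - (x:ℝ) := by linarith [hxI.2]
    have hεR : (0:ℝ) < (ε:ℝ) := by exact_mod_cast hε
    obtain ⟨ε', hε'0, hε'lt⟩ := exists_rat_btwn (lt_min (lt_min hδ1 hδ2) hεR : (0:ℝ) < _)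
    have hε'pos : 0 < ε' := by exact_mod_cast hε'0
    have hε'a : (ε':ℝ) < (x:ℝ) - (n:ℝ)*sIr := lt_of_lt_of_le hε'lt (le_trans (min_le_left _ _) (min_le_left _ _))
    have hε'b : (ε':ℝ) < ((n:ℝ)+1)*sIr - (x:ℝ) := lt_of_lt_of_le hε'lt (le_trans (min_le_left _ _) (min_le_right _ _))
    have hε'c : ε' < ε := by
      have : (ε':ℝ) < (ε:ℝ) := lt_of_lt_of_le hε'lt (min_le_right _ _)
      exact_mod_cast this
    obtain ⟨⟨y, hyX, hy1, hy2⟩, ⟨z, hzX, hz1, hz2⟩⟩ := hXcr x hxX ε' hε'pos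
    constructor
    · refine ⟨y, ⟨hyX, n, hnS, ?_, ?_⟩, by linarith, hy2⟩
      · have : ((x - ε' : ℚ) : ℝ) < (y:ℝ) := by exact_mod_cast hy1
        push_cast at this
        linarith
      · have : (y:ℝ) < (x:ℝ) := by exact_mod_cast hy2
        linarith [hxI.2]
    · refine ⟨z, ⟨hzX, n, hnS, ?_, ?_⟩, hz1, by linarith⟩
      · have : (x:ℝ) < (z:ℝ) := by exact_mod_cast hz1
        linarith [hxI.1]
      · have : (z:ℝ) < ((x + ε' : ℚ) : ℝ) := by exact_mod_cast hz2
        push_cast at this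
        linarith
  · -- UnbAbove
    intro b
    obtain ⟨N, hN⟩ := exists_nat_gt ((b:ℝ)/sIr)
    have hNb : (b:ℝ) < (N:ℝ) * sIr := by
      have := mul_lt_mul_of_pos_right hN sIr_pos
      rwa [div_mul_cancel₀ _ sIr_pos.ne'] at this
    obtain ⟨n, hn, hNn⟩ : ∃ n ∈ {n | n ∈ S ∧ (X ∩ Iset n).Nonempty}, N < n := by
      by_contra hc
      push_neg at hc
      exact hT ((Set.finite_Iic N).subset (fun n hn => hc n hn))
    obtain ⟨x, hxX, hxI⟩ := hn.2
    refine ⟨x, ⟨hxX, n, hn.1, hxI⟩, ?_⟩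
    have h1 : (N:ℝ) * sIr ≤ (n:ℝ) * sIr :=
      mul_le_mul_of_nonneg_right (by exact_mod_cast hNn.le) sIr_pos.le
    have : (b:ℝ) < (x:ℝ) := lt_of_lt_of_le (lt_of_lt_of_le hNb h1) hxI.1.le
    exact_mod_cast this

lemma Nset_infinite {X : Set ℚ} (hX : X ∈ Bfam) :
    {n : ℕ | (X ∩ Iset n).Nonempty}.Infinite := by
  apply Set.infinite_of_forall_exists_gt
  intro N
  obtain ⟨b, hb⟩ := exists_rat_gt (((N:ℝ)+1) * sIr)
  obtain ⟨x, hxX, hbx⟩ := hX.2.2.2 b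
  have hx0 : 0 < x := hX.1 hxX
  obtain ⟨n, hn⟩ := Iset_exists hx0
  refine ⟨n, ⟨x, hxX, hn⟩, ?_⟩
  have hxb : (b:ℝ) < (x:ℝ) := by exact_mod_cast hbx
  have h1 : ((N:ℝ)+1) * sIr < ((n:ℝ)+1) * sIr := by
    calc ((N:ℝ)+1) * sIr < (b:ℝ) := hb
    _ < (x:ℝ) := hxb
    _ < ((n:ℝ)+1) * sIr := hn.2
  have h2 : (N:ℝ)+1 < (n:ℝ)+1 := lt_of_mul_lt_mul_right h1 sIr_pos.le
  exact_mod_cast (by linarith : (N:ℝ) < (n:ℝ))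

lemma QposSet_mem_Bfam : QposSet ∈ Bfam := by
  refine ⟨le_refl _, ⟨Set.univ, isClosed_univ, by simp⟩, ?_, ?_⟩
  · intro x hx ε hε
    have hx0 : 0 < x := hx
    constructor
    · refine ⟨x - min ε x / 2, ?_, ?_, ?_⟩
      · have h : min ε x ≤ x := min_le_right _ _
        have h0 : 0 < min ε x := lt_min hε hx0
        show 0 < x - min ε x / 2
        linarith
      · have h : min ε x ≤ ε := min_le_left _ _
        have h0 : 0 < min ε x := lt_min hε hx0
        linarith
      · have h0 : 0 < min ε x := lt_min hε hx0
        linarith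
    · exact ⟨x + ε/2, by show (0:ℚ) < x + ε/2; positivity, by linarith, by linarith⟩
  · intro b
    refine ⟨max b 0 + 1, ?_, ?_⟩
    · show (0:ℚ) < max b 0 + 1
      have := le_max_right b 0
      linarith
    · have := le_max_left b 0
      linarith

lemma empty_not_memPprime : ¬ MemPprime (∅ : Set ℚ) := by
  rintro ⟨B, hB, hBsub⟩
  obtain ⟨x, hx, -⟩ := hB.2.2.2 0
  exact hBsub hx

lemma rP_set_nonempty :
    {c : Cardinal | ∃ 𝒳 : Set (Set ℚ), Cardinal.mk 𝒳 = c ∧ 𝒳 ⊆ Bfam ∧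
      ∀ A : Set ℚ, ∃ X ∈ 𝒳, ¬ MemPprime (X \ A) ∨ ¬ MemPprime (X ∩ A)}.Nonempty := by
  refine ⟨Cardinal.mk Bfam, Bfam, rfl, le_refl _, ?_⟩
  intro A
  by_cases hA : MemPprime A
  · obtain ⟨B, hB, hBA⟩ := hA
    refine ⟨B, hB, Or.inl ?_⟩
    have : B \ A = ∅ := Set.diff_eq_empty.2 hBA
    rw [this]
    exact empty_not_memPprime
  · refine ⟨QposSet, QposSet_mem_Bfam, Or.inr ?_⟩
    rintro ⟨B, hB, hBsub⟩
    exact hA ⟨B, hB, fun x hx => (hBsub hx).2⟩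

end AuxStmt13


/-- 𝔯 ≤ 𝔯_P. -/
theorem stmt13 : reapNumber ≤ rP := by
  apply le_csInf rP_set_nonempty
  rintro c ⟨𝒳, hmk, h𝒳, hreap⟩
  set R : Set (Set ℕ) := (fun X : Set ℚ => {n : ℕ | (X ∩ Iset n).Nonempty}) '' 𝒳 with hR
  have hRcard : Cardinal.mk R ≤ c := hmk ▸ Cardinal.mk_image_le
  have hRmem : Cardinal.mk R ∈ {c : Cardinal | ∃ R' : Set (Set ℕ),
      Cardinal.mk R' = c ∧ (∀ A ∈ R', A.Infinite) ∧
      ∀ Y : Set ℕ, ∃ A ∈ R', (A \ Y).Finite ∨ (A ∩ Y).Finite} := by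
    refine ⟨R, rfl, ?_, ?_⟩
    · rintro A ⟨X, hX, rfl⟩
      exact Nset_infinite (h𝒳 hX)
    · intro Y
      obtain ⟨X, hX𝒳, hX⟩ := hreap (USet Y)
      refine ⟨{n : ℕ | (X ∩ Iset n).Nonempty}, ⟨X, hX𝒳, rfl⟩, ?_⟩
      rcases hX with h | h
      · left
        by_contra hinf
        apply h
        refine ⟨X ∩ USet Yᶜ, inter_USet_mem_Bfam (h𝒳 hX𝒳) ?_, ?_⟩
        · have heq : {n | n ∈ Yᶜ ∧ (X ∩ Iset n).Nonempty}
              = {n : ℕ | (X ∩ Iset n).Nonempty} \ Y := by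
            ext n
            simp only [Set.mem_setOf_eq, Set.mem_diff, Set.mem_compl_iff]
            tauto
          rw [heq]
          exact hinf
        · rintro q ⟨hqX, n, hnY, hqI⟩
          refine ⟨hqX, ?_⟩
          rintro ⟨m, hmY, hqI'⟩
          exact hnY (Iset_unique hqI hqI' ▸ hmY)
      · right
        by_contra hinf
        apply h
        refine ⟨X ∩ USet Y, inter_USet_mem_Bfam (h𝒳 hX𝒳) ?_, le_refl _⟩
        have heq : {n | n ∈ Y ∧ (X ∩ Iset n).Nonempty}
            = {n : ℕ | (X ∩ Iset n).Nonempty} ∩ Y := by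
          ext n
          simp only [Set.mem_setOf_eq, Set.mem_inter_iff]
          tauto
        rw [heq]
        exact hinf
  exact le_trans (csInf_le' hRmem) hRcard
end

section
/- Every nonempty subset B of ℚ that contains a two-sided crowded subset has a maximal two-sided crowded subset C (the union of all two-sided crowded subsets of B), and C contains a two-sided perfect subset of ℚ. -/
namespace S17

def AccR (S : Set ℚ) (a : ℝ) : Prop :=
  ∀ δ : ℝ, 0 < δ → ∃ t ∈ S, a < (t : ℝ) ∧ (t : ℝ) < a + δ

def AccL (S : Set ℚ) (a : ℝ) : Prop :=
  ∀ δ : ℝ, 0 < δ → ∃ t ∈ S, a - δ < (t : ℝ) ∧ (t : ℝ) < a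

lemma accR_of_mem {S : Set ℚ} {x : ℚ} (hS : TwoSidedCrowded S) (hx : x ∈ S) :
    AccR S (x : ℝ) := by
  intro δ hδ
  obtain ⟨q, hq0, hqδ⟩ := exists_rat_btwn hδ
  have hq0' : 0 < q := by exact_mod_cast hq0
  obtain ⟨-, t, ht, h1, h2⟩ := hS x hx q hq0'
  have h2' : (t:ℝ) < (x:ℝ) + (q:ℝ) := by exact_mod_cast h2
  exact ⟨t, ht, by exact_mod_cast h1, by linarith⟩

lemma accL_of_mem {S : Set ℚ} {x : ℚ} (hS : TwoSidedCrowded S) (hx : x ∈ S) :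
    AccL S (x : ℝ) := by
  intro δ hδ
  obtain ⟨q, hq0, hqδ⟩ := exists_rat_btwn hδ
  have hq0' : 0 < q := by exact_mod_cast hq0
  obtain ⟨⟨t, ht, h1, h2⟩, -⟩ := hS x hx q hq0'
  have h1' : (x:ℝ) - (q:ℝ) < (t:ℝ) := by exact_mod_cast h1
  exact ⟨t, ht, by linarith, by exact_mod_cast h2⟩

lemma mul_lemma (g : ℕ → ℝ) (N : ℕ) (hN : 1 ≤ N) (hpos : 0 < g N)
    (hstep : ∀ n, N ≤ n → g (n+1) = g n ∨ g n * (1 - (1/2:ℝ)^(n+1)) ≤ g (n+1)) :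
    ∀ n, N ≤ n → g N * (1/2) ≤ g n := by
  have key : ∀ n, N ≤ n → g N * (1/2 + (1/2:ℝ)^n) ≤ g n := by
    intro n hn
    induction n, hn using Nat.le_induction with
    | base =>
        have h1 : (1/2:ℝ)^N ≤ (1/2)^1 := pow_le_pow_of_le_one (by norm_num) (by norm_num) hN
        nlinarith
    | succ n hn ih =>
        have hn1 : 1 ≤ n := le_trans hN hn
        have ht : (0:ℝ) < (1/2)^n := pow_pos (by norm_num) n
        have ht2 : (1/2:ℝ)^n ≤ (1/2)^1 := pow_le_pow_of_le_one (by norm_num) (by norm_num) hn1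
        have hp : (1/2:ℝ)^(n+1) = (1/2)^n * (1/2) := pow_succ _ _
        rcases hstep n hn with h | h
        · rw [h]; nlinarith
        · have hscal : (1/2 + (1/2:ℝ)^(n+1)) ≤ (1/2 + (1/2)^n) * (1 - (1/2)^(n+1)) := by
            rw [hp]; nlinarith
          have h3 : g N * (1/2 + (1/2:ℝ)^n) * (1 - (1/2)^(n+1)) ≤ g n * (1 - (1/2)^(n+1)) := by
            apply mul_le_mul_of_nonneg_right ih
            nlinarith
          calc g N * (1/2 + (1/2:ℝ)^(n+1))
              ≤ g N * ((1/2 + (1/2)^n) * (1 - (1/2)^(n+1))) :=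
                mul_le_mul_of_nonneg_left hscal hpos.le
            _ = g N * (1/2 + (1/2)^n) * (1 - (1/2)^(n+1)) := (mul_assoc _ _ _).symm
            _ ≤ g n * (1 - (1/2)^(n+1)) := h3
            _ ≤ g (n+1) := h
  intro n hn
  have := key n hn
  have ht : (0:ℝ) < (1/2)^n := pow_pos (by norm_num) n
  nlinarith

/-- avoidance bound for the decreasing sequence -/
noncomputable def ddown (e : ℕ → ℚ) (n : ℕ) (s : ℚ) : ℚ :=
  min ((1/2)^(n+1))
    (if h : ((Finset.range (n+1)).filter (fun j => e j < s)).Nonempty then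
      ((Finset.range (n+1)).filter (fun j => e j < s)).inf' h
        (fun j => (s - e j) * (1/2)^(n+1))
    else 1)

lemma ddown_pos (e : ℕ → ℚ) (n : ℕ) (s : ℚ) : 0 < ddown e n s := by
  unfold ddown
  apply lt_min
  · positivity
  · split
    · next h =>
        rw [Finset.lt_inf'_iff]
        intro j hj
        have h1 := (Finset.mem_filter.1 hj).2
        have h2 : (0:ℚ) < (1/2)^(n+1) := by positivity
        nlinarith
    · norm_num

lemma ddown_small (e : ℕ → ℚ) (n : ℕ) (s : ℚ) : ddown e n s ≤ (1/2)^(n+1) :=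
  min_le_left _ _

lemma ddown_avoid (e : ℕ → ℚ) (n : ℕ) (s : ℚ) (j : ℕ) (hj : j ≤ n) (hejs : e j < s) :
    ddown e n s ≤ (s - e j) * (1/2)^(n+1) := by
  have hjmem : j ∈ (Finset.range (n+1)).filter (fun j => e j < s) := by
    simp [Finset.mem_filter, Finset.mem_range, Nat.lt_succ_iff, hj, hejs]
  have hne : ((Finset.range (n+1)).filter (fun j => e j < s)).Nonempty := ⟨j, hjmem⟩
  calc ddown e n s ≤ _ := min_le_right _ _
    _ ≤ (s - e j) * (1/2)^(n+1) := by rw [dif_pos hne]; exact Finset.inf'_le _ hjmem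

open Classical in
noncomputable def seqD (S : Set ℚ) (e : ℕ → ℚ) (x0 : ℚ) : ℕ → ℚ
  | 0 => x0
  | n+1 =>
      if h : ∃ t, t ∈ S ∧ seqD S e x0 n - ddown e n (seqD S e x0 n) < t ∧ t < seqD S e x0 n
      then h.choose else seqD S e x0 n

open Classical in
lemma seqD_succ (S : Set ℚ) (e : ℕ → ℚ) (x0 : ℚ) (n : ℕ) :
    seqD S e x0 (n+1) =
      if h : ∃ t, t ∈ S ∧ seqD S e x0 n - ddown e n (seqD S e x0 n) < t ∧ t < seqD S e x0 n
      then h.choose else seqD S e x0 n := by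
  rw [seqD]

lemma seqD_mem (S : Set ℚ) (hS : TwoSidedCrowded S) (e : ℕ → ℚ) (x0 : ℚ) (hx0 : x0 ∈ S) :
    ∀ n, seqD S e x0 n ∈ S := by
  intro n
  induction n with
  | zero => exact hx0
  | succ n ih =>
      have hex : ∃ t, t ∈ S ∧ seqD S e x0 n - ddown e n (seqD S e x0 n) < t ∧ t < seqD S e x0 n := by
        obtain ⟨⟨t, ht, h1, h2⟩, -⟩ := hS _ ih (ddown e n (seqD S e x0 n)) (ddown_pos e n _)
        exact ⟨t, ht, h1, h2⟩
      rw [seqD_succ, dif_pos hex]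
      exact hex.choose_spec.1

lemma seqD_dec (S : Set ℚ) (hS : TwoSidedCrowded S) (e : ℕ → ℚ) (x0 : ℚ) (hx0 : x0 ∈ S) :
    ∀ n, seqD S e x0 (n+1) < seqD S e x0 n ∧
      seqD S e x0 n - ddown e n (seqD S e x0 n) < seqD S e x0 (n+1) := by
  intro n
  have hex : ∃ t, t ∈ S ∧ seqD S e x0 n - ddown e n (seqD S e x0 n) < t ∧ t < seqD S e x0 n := by
    obtain ⟨⟨t, ht, h1, h2⟩, -⟩ := hS _ (seqD_mem S hS e x0 hx0 n) (ddown e n (seqD S e x0 n))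
      (ddown_pos e n _)
    exact ⟨t, ht, h1, h2⟩
  rw [seqD_succ, dif_pos hex]
  exact ⟨hex.choose_spec.2.2, hex.choose_spec.2.1⟩

lemma exists_acc_below (S : Set ℚ) (hS : TwoSidedCrowded S) (e : ℕ → ℚ)
    (he : Function.Surjective e) (x0 : ℚ) (hx0 : x0 ∈ S) :
    ∃ β : ℝ, Irrational β ∧ β < (x0 : ℝ) ∧ AccR S β := by
  classical
  set s : ℕ → ℚ := seqD S e x0 with hs_def
  have hs0 : s 0 = x0 := rfl
  have hmem : ∀ n, s n ∈ S := seqD_mem S hS e x0 hx0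
  have hdec : ∀ n, s (n+1) < s n ∧ s n - ddown e n (s n) < s (n+1) := seqD_dec S hS e x0 hx0
  have hanti : ∀ n m, n ≤ m → s m ≤ s n := by
    intro n m hnm
    induction m, hnm using Nat.le_induction with
    | base => exact le_refl _
    | succ m hm ih => exact le_trans (le_of_lt (hdec m).1) ih
  have hlow : ∀ n, x0 - 1 + (1/2:ℚ)^n ≤ s n := by
    intro n
    induction n with
    | zero => simp [hs0]
    | succ n ih =>
        have h1 := (hdec n).2
        have h2 : ddown e n (s n) ≤ (1/2)^(n+1) := ddown_small e n (s n)
        have h3 : (1/2:ℚ)^(n+1) = (1/2)^n * (1/2) := pow_succ _ _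
        nlinarith
  have hbdd : BddBelow (Set.range fun n => ((s n : ℚ) : ℝ)) := by
    refine ⟨((x0 - 2 : ℚ) : ℝ), ?_⟩
    rintro _ ⟨n, rfl⟩
    have h1 := hlow n
    have h2 : (0:ℚ) < (1/2)^n := by positivity
    have h3 : (x0:ℚ) - 2 ≤ s n := by nlinarith
    show ((x0 - 2 : ℚ) : ℝ) ≤ ((s n : ℚ) : ℝ)
    exact_mod_cast h3
  have hβle : ∀ n, (⨅ n, ((s n : ℚ) : ℝ)) ≤ s n := fun n => ciInf_le hbdd n
  have hβlt : ∀ n, (⨅ n, ((s n : ℚ) : ℝ)) < s n := fun n =>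
    lt_of_le_of_lt (hβle (n+1)) (by exact_mod_cast (hdec n).1)
  refine ⟨⨅ n, ((s n : ℚ) : ℝ), ?_, by rw [← hs0]; exact hβlt 0, ?_⟩
  · rintro ⟨q, hq⟩
    obtain ⟨k, hk⟩ := he q
    by_cases hcase : ∀ n, q < s n
    · have hstep : ∀ n, k + 1 ≤ n →
          (fun n => ((s n : ℚ):ℝ) - (q:ℝ)) (n+1) = (fun n => ((s n : ℚ):ℝ) - (q:ℝ)) n ∨
          (fun n => ((s n : ℚ):ℝ) - (q:ℝ)) n * (1 - (1/2:ℝ)^(n+1)) ≤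
            (fun n => ((s n : ℚ):ℝ) - (q:ℝ)) (n+1) := by
        intro n hn
        right
        simp only
        have h1 := (hdec n).2
        have h2 := ddown_avoid e n (s n) k (by omega) (by rw [hk]; exact hcase n)
        rw [hk] at h2
        have h3 : s n - (s n - q) * (1/2)^(n+1) < s (n+1) := by nlinarith
        have hc : ((s n - (s n - q) * (1/2)^(n+1) : ℚ) : ℝ) ≤ ((s (n+1):ℚ):ℝ) := by
          exact_mod_cast h3.le
        push_cast at hc
        nlinarith [hc]
      have hposN : 0 < ((s (k+1) : ℚ):ℝ) - (q:ℝ) := by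
        have h1 : (q:ℝ) < ((s (k+1):ℚ):ℝ) := by exact_mod_cast hcase (k+1)
        linarith
      have hmul := mul_lemma (fun n => ((s n:ℚ):ℝ) - (q:ℝ)) (k+1) (by omega) hposN hstep
      have hgea : ∀ n, (q:ℝ) + (((s (k+1) : ℚ):ℝ) - (q:ℝ)) * (1/2) ≤ ((s n : ℚ):ℝ) := by
        intro n
        rcases le_or_gt (k+1) n with h | h
        · have := hmul n h; linarith
        · have h2 : s (k+1) ≤ s n := hanti n (k+1) (le_of_lt h)
          have h2' : ((s (k+1):ℚ):ℝ) ≤ ((s n:ℚ):ℝ) := by exact_mod_cast h2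
          nlinarith
      have hβge : (q:ℝ) + (((s (k+1) : ℚ):ℝ) - (q:ℝ)) * (1/2) ≤ ⨅ n, ((s n : ℚ) : ℝ) :=
        le_ciInf hgea
      rw [← hq] at hβge
      nlinarith
    · push_neg at hcase
      obtain ⟨n, hn⟩ := hcase
      have h1 := hβlt n
      have h2 : ((s n:ℚ):ℝ) ≤ (q:ℝ) := by exact_mod_cast hn
      rw [← hq] at h1
      linarith
  · intro δ hδ
    have hlt : (⨅ n, ((s n : ℚ) : ℝ)) < (⨅ n, ((s n : ℚ) : ℝ)) + δ := by linarith
    obtain ⟨n, hn⟩ := exists_lt_of_ciInf_lt hlt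
    exact ⟨s n, hmem n, hβlt n, hn⟩


lemma tsc_neg (S : Set ℚ) (hS : TwoSidedCrowded S) : TwoSidedCrowded {q : ℚ | -q ∈ S} := by
  intro x hx ε hε
  obtain ⟨⟨y, hy, hy1, hy2⟩, ⟨w, hw, hw1, hw2⟩⟩ := hS (-x) hx ε hε
  constructor
  · exact ⟨-w, by simpa using hw, by linarith, by linarith⟩
  · exact ⟨-y, by simpa using hy, by linarith, by linarith⟩

lemma exists_acc_above (S : Set ℚ) (hS : TwoSidedCrowded S) (e : ℕ → ℚ)
    (he : Function.Surjective e) (x0 : ℚ) (hx0 : x0 ∈ S) :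
    ∃ γ : ℝ, Irrational γ ∧ (x0 : ℝ) < γ ∧ AccL S γ := by
  have he' : Function.Surjective (fun n => -(e n)) := by
    intro q
    obtain ⟨k, hk⟩ := he (-q)
    exact ⟨k, by simp [hk]⟩
  obtain ⟨β, hirr, hβ, hAcc⟩ := exists_acc_below {q : ℚ | -q ∈ S} (tsc_neg S hS)
    (fun n => -(e n)) he' (-x0) (by simpa using hx0)
  refine ⟨-β, hirr.neg, by push_cast at hβ ⊢; linarith, ?_⟩
  intro δ hδ
  obtain ⟨t, ht, h1, h2⟩ := hAcc δ hδ
  refine ⟨-t, ht, ?_, ?_⟩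
  · push_cast; linarith
  · push_cast; linarith

/-! ### The tree construction -/

def Good (S : Set ℚ) (p : ℝ × ℚ × ℝ) : Prop :=
  p.2.1 ∈ S ∧ p.1 < (p.2.1 : ℝ) ∧ ((p.2.1 : ℝ)) < p.2.2 ∧ AccR S p.1 ∧ AccL S p.2.2

def LOK (S : Set ℚ) (e : ℕ → ℚ) (d : ℕ) (p : ℝ × ℚ × ℝ) (y : ℚ) : Prop :=
  y ∈ S ∧ p.1 < (y:ℝ) ∧ (y:ℝ) < (p.2.1:ℝ) ∧ (y:ℝ) < p.1 + (1/2)^d ∧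
  ∀ j ≤ d, p.1 < (e j:ℝ) → ((e j : ℚ):ℝ) < (p.2.1:ℝ) →
    (y:ℝ) ≤ p.1 + ((e j:ℝ) - p.1) * (1/2)^(d+2)

def ROK (S : Set ℚ) (e : ℕ → ℚ) (d : ℕ) (p : ℝ × ℚ × ℝ) (y : ℚ) : Prop :=
  y ∈ S ∧ ((p.2.1:ℚ):ℝ) < (y:ℝ) ∧ (y:ℝ) < p.2.2 ∧ p.2.2 - (1/2)^d < (y:ℝ) ∧
  ∀ j ≤ d, ((p.2.1:ℚ):ℝ) < (e j:ℝ) → ((e j : ℚ):ℝ) < p.2.2 →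
    p.2.2 - (p.2.2 - ((e j):ℝ)) * (1/2)^(d+2) ≤ (y:ℝ)

lemma exists_LOK (S : Set ℚ) (e : ℕ → ℚ) (d : ℕ) (p : ℝ × ℚ × ℝ) (hp : Good S p) :
    ∃ y, LOK S e d p y := by
  classical
  obtain ⟨hx, hlx, hxr, hAl, hAr⟩ := hp
  set T := (Finset.range (d+1)).filter (fun j => p.1 < (e j:ℝ) ∧ ((e j : ℚ):ℝ) < (p.2.1:ℝ))
    with hT
  set tb : ℝ := if h : T.Nonempty then
      T.inf' h (fun j => p.1 + ((e j:ℝ) - p.1) * (1/2)^(d+2)) else p.1 + 1 with htb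
  have htb_gt : p.1 < tb := by
    rw [htb]
    split
    · next h =>
        rw [Finset.lt_inf'_iff]
        intro j hj
        rw [hT] at hj
        have h1 := (Finset.mem_filter.1 hj).2.1
        have h2 : (0:ℝ) < (1/2)^(d+2) := by positivity
        nlinarith
    · linarith
  have hpow : (0:ℝ) < (1/2)^d := by positivity
  set M := min (min ((p.2.1:ℚ):ℝ) (p.1 + (1/2)^d)) tb with hM
  have hM_gt : p.1 < M := lt_min (lt_min hlx (by linarith)) htb_gt
  obtain ⟨t, ht, h1, h2⟩ := hAl (M - p.1) (by linarith)
  have h2' : (t:ℝ) < M := by linarith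
  have hMx : M ≤ ((p.2.1:ℚ):ℝ) := le_trans (min_le_left _ _) (min_le_left _ _)
  have hMp : M ≤ p.1 + (1/2)^d := le_trans (min_le_left _ _) (min_le_right _ _)
  have hMtb : M ≤ tb := min_le_right _ _
  refine ⟨t, ht, h1, by linarith, by linarith, ?_⟩
  intro j hjd hj1 hj2
  have hjmem : j ∈ T := by
    rw [hT]
    simp only [Finset.mem_filter, Finset.mem_range, Nat.lt_succ_iff]
    exact ⟨hjd, hj1, hj2⟩
  have hne : T.Nonempty := ⟨j, hjmem⟩
  have htb_le : tb ≤ p.1 + ((e j:ℝ) - p.1) * (1/2)^(d+2) := by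
    rw [htb, dif_pos hne]
    exact Finset.inf'_le _ hjmem
  linarith

lemma exists_ROK (S : Set ℚ) (e : ℕ → ℚ) (d : ℕ) (p : ℝ × ℚ × ℝ) (hp : Good S p) :
    ∃ y, ROK S e d p y := by
  classical
  obtain ⟨hx, hlx, hxr, hAl, hAr⟩ := hp
  set T := (Finset.range (d+1)).filter (fun j => ((p.2.1:ℚ):ℝ) < (e j:ℝ) ∧ ((e j : ℚ):ℝ) < p.2.2)
    with hT
  set tb : ℝ := if h : T.Nonempty then
      T.sup' h (fun j => p.2.2 - (p.2.2 - ((e j):ℝ)) * (1/2)^(d+2)) else p.2.2 - 1 with htb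
  have htb_lt : tb < p.2.2 := by
    rw [htb]
    split
    · next h =>
        refine (Finset.sup'_lt_iff h).2 ?_
        intro j hj
        rw [hT] at hj
        have h1 := (Finset.mem_filter.1 hj).2.2
        have h2 : (0:ℝ) < (1/2)^(d+2) := by positivity
        nlinarith
    · linarith
  have hpow : (0:ℝ) < (1/2)^d := by positivity
  set M := max (max ((p.2.1:ℚ):ℝ) (p.2.2 - (1/2)^d)) tb with hM
  have hM_lt : M < p.2.2 := max_lt (max_lt hxr (by linarith)) htb_lt
  obtain ⟨t, ht, h1, h2⟩ := hAr (p.2.2 - M) (by linarith)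
  have h1' : M < (t:ℝ) := by linarith
  have hMx : ((p.2.1:ℚ):ℝ) ≤ M := le_trans (le_max_left _ _) (le_max_left _ _)
  have hMp : p.2.2 - (1/2)^d ≤ M := le_trans (le_max_right _ _) (le_max_left _ _)
  have hMtb : tb ≤ M := le_max_right _ _
  refine ⟨t, ht, by linarith, h2, by linarith, ?_⟩
  intro j hjd hj1 hj2
  have hjmem : j ∈ T := by
    rw [hT]
    simp only [Finset.mem_filter, Finset.mem_range, Nat.lt_succ_iff]
    exact ⟨hjd, hj1, hj2⟩
  have hne : T.Nonempty := ⟨j, hjmem⟩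
  have htb_le : p.2.2 - (p.2.2 - ((e j):ℝ)) * (1/2)^(d+2) ≤ tb := by
    rw [htb, dif_pos hne]
    exact Finset.le_sup' (fun j => p.2.2 - (p.2.2 - ((e j):ℝ)) * (1/2)^(d+2)) hjmem
  linarith

open Classical in
noncomputable def childL (S : Set ℚ) (e : ℕ → ℚ) (d : ℕ) (p : ℝ × ℚ × ℝ) : ℝ × ℚ × ℝ :=
  if h : ∃ y, LOK S e d p y then (p.1, h.choose, ((p.2.1:ℚ):ℝ)) else p

open Classical in
noncomputable def childR (S : Set ℚ) (e : ℕ → ℚ) (d : ℕ) (p : ℝ × ℚ × ℝ) : ℝ × ℚ × ℝ :=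
  if h : ∃ y, ROK S e d p y then (((p.2.1:ℚ):ℝ), h.choose, p.2.2) else p

noncomputable def node (S : Set ℚ) (e : ℕ → ℚ) (rt : ℝ × ℚ × ℝ) : List Bool → ℝ × ℚ × ℝ
  | [] => rt
  | b :: σ => if b then childR S e σ.length (node S e rt σ)
              else childL S e σ.length (node S e rt σ)

lemma childL_spec (S : Set ℚ) (e : ℕ → ℚ) (d : ℕ) (p : ℝ × ℚ × ℝ) (hp : Good S p) :
    (childL S e d p).1 = p.1 ∧ (childL S e d p).2.2 = ((p.2.1:ℚ):ℝ) ∧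
      LOK S e d p ((childL S e d p).2.1) := by
  have h := exists_LOK S e d p hp
  unfold childL
  rw [dif_pos h]
  exact ⟨rfl, rfl, h.choose_spec⟩

lemma childR_spec (S : Set ℚ) (e : ℕ → ℚ) (d : ℕ) (p : ℝ × ℚ × ℝ) (hp : Good S p) :
    (childR S e d p).1 = ((p.2.1:ℚ):ℝ) ∧ (childR S e d p).2.2 = p.2.2 ∧
      ROK S e d p ((childR S e d p).2.1) := by
  have h := exists_ROK S e d p hp
  unfold childR
  rw [dif_pos h]
  exact ⟨rfl, rfl, h.choose_spec⟩

lemma good_childL (S : Set ℚ) (hS : TwoSidedCrowded S) (e : ℕ → ℚ) (d : ℕ) (p : ℝ × ℚ × ℝ)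
    (hp : Good S p) : Good S (childL S e d p) := by
  obtain ⟨h1, h2, h3⟩ := childL_spec S e d p hp
  obtain ⟨hy, hy1, hy2, -, -⟩ := h3
  exact ⟨hy, by rw [h1]; exact hy1, by rw [h2]; exact hy2,
    by rw [h1]; exact hp.2.2.2.1, by rw [h2]; exact accL_of_mem hS hp.1⟩

lemma good_childR (S : Set ℚ) (hS : TwoSidedCrowded S) (e : ℕ → ℚ) (d : ℕ) (p : ℝ × ℚ × ℝ)
    (hp : Good S p) : Good S (childR S e d p) := by
  obtain ⟨h1, h2, h3⟩ := childR_spec S e d p hp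
  obtain ⟨hy, hy1, hy2, -, -⟩ := h3
  exact ⟨hy, by rw [h1]; exact hy1, by rw [h2]; exact hy2,
    by rw [h1]; exact accR_of_mem hS hp.1, by rw [h2]; exact hp.2.2.2.2⟩

variable {S : Set ℚ} {e : ℕ → ℚ} {rt : ℝ × ℚ × ℝ}

lemma node_good (hS : TwoSidedCrowded S) (hrt : Good S rt) :
    ∀ σ : List Bool, Good S (node S e rt σ) := by
  intro σ
  induction σ with
  | nil => exact hrt
  | cons b σ ih =>
      show Good S (if b then childR S e σ.length (node S e rt σ)
        else childL S e σ.length (node S e rt σ))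
      cases b
      · simpa using good_childL S hS e σ.length _ ih
      · simpa using good_childR S hS e σ.length _ ih

lemma node_cons_false (hS : TwoSidedCrowded S) (hrt : Good S rt) (σ : List Bool) :
    (node S e rt (false :: σ)).1 = (node S e rt σ).1 ∧
    (node S e rt (false :: σ)).2.2 = (((node S e rt σ).2.1:ℚ):ℝ) ∧
    LOK S e σ.length (node S e rt σ) ((node S e rt (false :: σ)).2.1) := by
  have heq : node S e rt (false :: σ) = childL S e σ.length (node S e rt σ) := by
    simp [node]
  rw [heq]
  exact childL_spec S e σ.length _ (node_good hS hrt σ)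

lemma node_cons_true (hS : TwoSidedCrowded S) (hrt : Good S rt) (σ : List Bool) :
    (node S e rt (true :: σ)).1 = (((node S e rt σ).2.1:ℚ):ℝ) ∧
    (node S e rt (true :: σ)).2.2 = (node S e rt σ).2.2 ∧
    ROK S e σ.length (node S e rt σ) ((node S e rt (true :: σ)).2.1) := by
  have heq : node S e rt (true :: σ) = childR S e σ.length (node S e rt σ) := by
    simp [node]
  rw [heq]
  exact childR_spec S e σ.length _ (node_good hS hrt σ)

/-- child intervals are contained in parent intervals -/
lemma node_nest (hS : TwoSidedCrowded S) (hrt : Good S rt) (b : Bool) (σ : List Bool) :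
    (node S e rt σ).1 ≤ (node S e rt (b :: σ)).1 ∧
    (node S e rt (b :: σ)).2.2 ≤ (node S e rt σ).2.2 := by
  have hg := node_good (e := e) hS hrt σ
  cases b
  · obtain ⟨h1, h2, -⟩ := node_cons_false hS hrt σ
    rw [h1, h2]
    exact ⟨le_refl _, le_of_lt hg.2.2.1⟩
  · obtain ⟨h1, h2, -⟩ := node_cons_true hS hrt σ
    rw [h1, h2]
    exact ⟨le_of_lt hg.2.1, le_refl _⟩


lemma node_rep_true (hS : TwoSidedCrowded S) (hrt : Good S rt) (σ' : List Bool) :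
    ∀ m, (node S e rt (List.replicate m true ++ σ')).2.2 = (node S e rt σ').2.2 := by
  intro m
  induction m with
  | zero => simp
  | succ m ih =>
      rw [List.replicate_succ, List.cons_append]
      rw [(node_cons_true (e := e) hS hrt (List.replicate m true ++ σ')).2.1]
      exact ih

lemma node_rep_false (hS : TwoSidedCrowded S) (hrt : Good S rt) (σ' : List Bool) :
    ∀ m, (node S e rt (List.replicate m false ++ σ')).1 = (node S e rt σ').1 := by
  intro m
  induction m with
  | zero => simp
  | succ m ih =>
      rw [List.replicate_succ, List.cons_append]
      rw [(node_cons_false (e := e) hS hrt (List.replicate m false ++ σ')).1]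
      exact ih

lemma approx_below (hS : TwoSidedCrowded S) (hrt : Good S rt) (σ : List Bool) (ε : ℝ)
    (hε : 0 < ε) : ∃ τ : List Bool,
      ((node S e rt σ).2.1:ℝ) - ε < ((node S e rt τ).2.1:ℝ) ∧
      ((node S e rt τ).2.1:ℝ) < ((node S e rt σ).2.1:ℝ) := by
  obtain ⟨n, hn⟩ := exists_pow_lt_of_lt_one hε (by norm_num : (1/2:ℝ) < 1)
  set υ := List.replicate n true ++ (false :: σ) with hυ
  have hr : (node S e rt υ).2.2 = ((node S e rt σ).2.1:ℝ) := by
    rw [hυ, node_rep_true (e := e) hS hrt _ n]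
    exact (node_cons_false (e := e) hS hrt σ).2.1
  have hlen : n ≤ υ.length := by
    rw [hυ]; simp
  have hpow : (1/2:ℝ)^(υ.length) ≤ (1/2)^n :=
    pow_le_pow_of_le_one (by norm_num) (by norm_num) hlen
  obtain ⟨-, -, hROK⟩ := node_cons_true (e := e) hS hrt υ
  obtain ⟨-, -, h3, h4, -⟩ := hROK
  refine ⟨true :: υ, ?_, ?_⟩
  · rw [← hr]; linarith
  · rw [← hr]; exact h3

lemma approx_above (hS : TwoSidedCrowded S) (hrt : Good S rt) (σ : List Bool) (ε : ℝ)
    (hε : 0 < ε) : ∃ τ : List Bool,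
      ((node S e rt σ).2.1:ℝ) < ((node S e rt τ).2.1:ℝ) ∧
      ((node S e rt τ).2.1:ℝ) < ((node S e rt σ).2.1:ℝ) + ε := by
  obtain ⟨n, hn⟩ := exists_pow_lt_of_lt_one hε (by norm_num : (1/2:ℝ) < 1)
  set υ := List.replicate n false ++ (true :: σ) with hυ
  have hl : (node S e rt υ).1 = ((node S e rt σ).2.1:ℝ) := by
    rw [hυ, node_rep_false (e := e) hS hrt _ n]
    exact (node_cons_true (e := e) hS hrt σ).1
  have hlen : n ≤ υ.length := by
    rw [hυ]; simp
  have hpow : (1/2:ℝ)^(υ.length) ≤ (1/2)^n :=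
    pow_le_pow_of_le_one (by norm_num) (by norm_num) hlen
  obtain ⟨-, -, hLOK⟩ := node_cons_false (e := e) hS hrt υ
  obtain ⟨-, h2, -, h4, -⟩ := hLOK
  refine ⟨false :: υ, ?_, ?_⟩
  · rw [← hl]; exact h2
  · rw [← hl]; linarith

/-- the perfect set -/
def PP (S : Set ℚ) (e : ℕ → ℚ) (rt : ℝ × ℚ × ℝ) : Set ℚ :=
  Set.range (fun σ => (node S e rt σ).2.1)

lemma PP_nonempty : (PP S e rt).Nonempty := ⟨rt.2.1, [], rfl⟩

lemma PP_subset (hS : TwoSidedCrowded S) (hrt : Good S rt) : PP S e rt ⊆ S := by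
  rintro _ ⟨σ, rfl⟩
  exact (node_good (e := e) hS hrt σ).1

lemma PP_crowded (hS : TwoSidedCrowded S) (hrt : Good S rt) :
    TwoSidedCrowded (PP S e rt) := by
  rintro x ⟨σ, rfl⟩ ε hε
  have hε' : (0:ℝ) < (ε:ℝ) := by exact_mod_cast hε
  constructor
  · obtain ⟨τ, h1, h2⟩ := approx_below (e := e) hS hrt σ (ε:ℝ) hε'
    refine ⟨(node S e rt τ).2.1, ⟨τ, rfl⟩, ?_, ?_⟩
    · have : ((node S e rt σ).2.1:ℝ) - (ε:ℝ) < ((node S e rt τ).2.1:ℝ) := h1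
      exact_mod_cast (by push_cast; linarith : (((node S e rt σ).2.1 - ε : ℚ):ℝ) < ((node S e rt τ).2.1:ℝ))
    · exact_mod_cast h2
  · obtain ⟨τ, h1, h2⟩ := approx_above (e := e) hS hrt σ (ε:ℝ) hε'
    refine ⟨(node S e rt τ).2.1, ⟨τ, rfl⟩, ?_, ?_⟩
    · exact_mod_cast h1
    · exact_mod_cast (by push_cast; linarith : (((node S e rt τ).2.1 : ℚ):ℝ) < (((node S e rt σ).2.1 + ε : ℚ):ℝ))


lemma PP_closed (hS : TwoSidedCrowded S) (hrt : Good S rt) (he : Function.Surjective e)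
    (hirr1 : Irrational rt.1) (hirr2 : Irrational rt.2.2) : IsClosed (PP S e rt) := by
  apply isClosed_of_closure_subset
  intro z hz
  by_contra hzP
  have hclose : ∀ ε : ℝ, 0 < ε → ∃ p ∈ PP S e rt, |(z:ℝ) - (p:ℝ)| < ε := by
    intro ε hε
    obtain ⟨p, hp, hd⟩ := Metric.mem_closure_iff.1 hz ε hε
    exact ⟨p, hp, by rwa [Rat.dist_eq] at hd⟩
  have hne : ∀ σ, (node S e rt σ).2.1 ≠ z := fun σ h => hzP ⟨σ, h⟩
  have hroot_bounds : ∀ σ : List Bool, rt.1 ≤ (node S e rt σ).1 ∧ (node S e rt σ).2.2 ≤ rt.2.2 := by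
    intro σ
    induction σ with
    | nil => exact ⟨le_refl _, le_refl _⟩
    | cons b σ ih =>
        have h := node_nest (e := e) hS hrt b σ
        exact ⟨le_trans ih.1 h.1, le_trans h.2 ih.2⟩
  have hx_bounds : ∀ σ : List Bool, rt.1 < ((node S e rt σ).2.1:ℝ) ∧
      ((node S e rt σ).2.1:ℝ) < rt.2.2 := by
    intro σ
    have hg := node_good (e := e) hS hrt σ
    have hb := hroot_bounds σ
    exact ⟨lt_of_le_of_lt hb.1 hg.2.1, lt_of_lt_of_le hg.2.2.1 hb.2⟩
  have hzroot : rt.1 < (z:ℝ) ∧ (z:ℝ) < rt.2.2 := by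
    constructor
    · rcases lt_trichotomy ((z:ℝ)) rt.1 with h | h | h
      · exfalso
        obtain ⟨p, ⟨σ, rfl⟩, hd⟩ := hclose (rt.1 - (z:ℝ)) (by linarith)
        have h2 := (hx_bounds σ).1
        rw [abs_sub_lt_iff] at hd
        linarith [hd.2]
      · exact absurd ⟨z, h⟩ hirr1
      · exact h
    · rcases lt_trichotomy ((z:ℝ)) rt.2.2 with h | h | h
      · exact h
      · exact absurd ⟨z, h⟩ hirr2
      · exfalso
        obtain ⟨p, ⟨σ, rfl⟩, hd⟩ := hclose ((z:ℝ) - rt.2.2) (by linarith)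
        have h2 := (hx_bounds σ).2
        rw [abs_sub_lt_iff] at hd
        linarith [hd.1]
  classical
  set br : ℕ → List Bool :=
    fun n => Nat.rec [] (fun _ ih => (decide ((node S e rt ih).2.1 < z)) :: ih) n with hbr_def
  have hbrS : ∀ n, br (n+1) = (decide ((node S e rt (br n)).2.1 < z)) :: br n := fun n => rfl
  have hbrlen : ∀ n, (br n).length = n := by
    intro n
    induction n with
    | zero => rfl
    | succ n ih => rw [hbrS]; simp [ih]
  have hzin : ∀ n, (node S e rt (br n)).1 < (z:ℝ) ∧ (z:ℝ) < (node S e rt (br n)).2.2 := by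
    intro n
    induction n with
    | zero => exact hzroot
    | succ n ih =>
        by_cases hlt : (node S e rt (br n)).2.1 < z
        · have hb : br (n+1) = true :: br n := by rw [hbrS, decide_eq_true hlt]
          obtain ⟨h1, h2, -⟩ := node_cons_true (e := e) hS hrt (br n)
          rw [hb, h1, h2]
          exact ⟨by exact_mod_cast hlt, ih.2⟩
        · have hgt : (z:ℝ) < ((node S e rt (br n)).2.1:ℝ) := by
            have hle : z ≤ (node S e rt (br n)).2.1 := not_lt.1 hlt
            have hne' : z ≠ (node S e rt (br n)).2.1 := fun h => hne (br n) h.symm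
            exact_mod_cast lt_of_le_of_ne hle hne'
          have hb : br (n+1) = false :: br n := by rw [hbrS, decide_eq_false hlt]
          obtain ⟨h1, h2, -⟩ := node_cons_false (e := e) hS hrt (br n)
          rw [hb, h1, h2]
          exact ⟨ih.1, hgt⟩
  have hsep : ∀ τ : List Bool, τ = br τ.length ∨
      ∃ n, ∀ w : ℝ, (node S e rt τ).1 < w → w < (node S e rt τ).2.2 →
        |((node S e rt (br n)).2.1:ℝ) - (z:ℝ)| ≤ |w - (z:ℝ)| := by
    intro τ
    induction τ with
    | nil => left; rfl
    | cons b υ ih =>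
        rcases ih with hbr | ⟨n, hn⟩
        · by_cases hlt : (node S e rt υ).2.1 < z
          · cases b
            · -- divergence: branch goes true, τ goes false
              right
              refine ⟨υ.length, ?_⟩
              intro w hw1 hw2
              obtain ⟨h1, h2, -⟩ := node_cons_false (e := e) hS hrt υ
              rw [h2] at hw2
              rw [← hbr]
              have hxz : ((node S e rt υ).2.1:ℝ) < (z:ℝ) := by exact_mod_cast hlt
              rw [abs_of_neg (by linarith), abs_of_neg (by linarith)]
              linarith
            · left
              simp only [List.length_cons]
              rw [hbrS, ← hbr, decide_eq_true hlt]
          · have hgt : (z:ℝ) < ((node S e rt υ).2.1:ℝ) := by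
              have hle : z ≤ (node S e rt υ).2.1 := not_lt.1 hlt
              have hne' : z ≠ (node S e rt υ).2.1 := fun h => hne υ h.symm
              exact_mod_cast lt_of_le_of_ne hle hne'
            cases b
            · left
              simp only [List.length_cons]
              rw [hbrS, ← hbr, decide_eq_false hlt]
            · right
              refine ⟨υ.length, ?_⟩
              intro w hw1 hw2
              obtain ⟨h1, h2, -⟩ := node_cons_true (e := e) hS hrt υ
              rw [h1] at hw1
              rw [← hbr]
              rw [abs_of_pos (by linarith), abs_of_pos (by linarith)]
              linarith
        · right
          refine ⟨n, ?_⟩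
          intro w hw1 hw2
          have hnest := node_nest (e := e) hS hrt b υ
          exact hn w (lt_of_le_of_lt hnest.1 hw1) (lt_of_lt_of_le hw2 hnest.2)
  have hbranch_close : ∀ ε : ℝ, 0 < ε →
      ∃ n, |((node S e rt (br n)).2.1:ℝ) - (z:ℝ)| < ε := by
    intro ε hε
    obtain ⟨p, ⟨τ, rfl⟩, hd⟩ := hclose ε hε
    rw [abs_sub_comm] at hd
    rcases hsep τ with h | ⟨n, hn⟩
    · exact ⟨τ.length, by rw [← h]; exact hd⟩
    · have hg := node_good (e := e) hS hrt τ
      exact ⟨n, lt_of_le_of_lt (hn _ hg.2.1 hg.2.2.1) hd⟩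
  have hupd : ∀ n, ((node S e rt (br n)).2.1 < z ∧
        (node S e rt (br (n+1))).1 = ((node S e rt (br n)).2.1:ℝ) ∧
        (node S e rt (br (n+1))).2.2 = (node S e rt (br n)).2.2) ∨
      ((z:ℝ) < ((node S e rt (br n)).2.1:ℝ) ∧
        (node S e rt (br (n+1))).2.2 = ((node S e rt (br n)).2.1:ℝ) ∧
        (node S e rt (br (n+1))).1 = (node S e rt (br n)).1) := by
    intro n
    by_cases hlt : (node S e rt (br n)).2.1 < z
    · left
      have hb : br (n+1) = true :: br n := by rw [hbrS, decide_eq_true hlt]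
      obtain ⟨h1, h2, -⟩ := node_cons_true (e := e) hS hrt (br n)
      rw [hb]
      exact ⟨hlt, h1, h2⟩
    · right
      have hgt : (z:ℝ) < ((node S e rt (br n)).2.1:ℝ) := by
        have hle : z ≤ (node S e rt (br n)).2.1 := not_lt.1 hlt
        have hne' : z ≠ (node S e rt (br n)).2.1 := fun h => hne (br n) h.symm
        exact_mod_cast lt_of_le_of_ne hle hne'
      have hb : br (n+1) = false :: br n := by rw [hbrS, decide_eq_false hlt]
      obtain ⟨h1, h2, -⟩ := node_cons_false (e := e) hS hrt (br n)
      rw [hb]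
      exact ⟨hgt, h2, h1⟩
  have hLmono : ∀ n m, n ≤ m → (node S e rt (br n)).1 ≤ (node S e rt (br m)).1 := by
    intro n m hnm
    induction m, hnm using Nat.le_induction with
    | base => exact le_refl _
    | succ m hm ih =>
        rcases hupd m with ⟨-, h1, -⟩ | ⟨-, -, h1⟩
        · rw [h1]; exact le_trans ih (le_of_lt (node_good (e := e) hS hrt (br m)).2.1)
        · rw [h1]; exact ih
  have hRmono : ∀ n m, n ≤ m → (node S e rt (br m)).2.2 ≤ (node S e rt (br n)).2.2 := by
    intro n m hnm
    induction m, hnm using Nat.le_induction with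
    | base => exact le_refl _
    | succ m hm ih =>
        rcases hupd m with ⟨-, -, h1⟩ | ⟨-, h1, -⟩
        · rw [h1]; exact ih
        · rw [h1]; exact le_trans (le_of_lt (node_good (e := e) hS hrt (br m)).2.2.1) ih
  have hdich : (∀ ε:ℝ, 0 < ε → ∃ n, ((node S e rt (br n)).2.1:ℝ) < (z:ℝ) ∧
        (z:ℝ) - ((node S e rt (br n)).2.1:ℝ) < ε) ∨
      (∀ ε:ℝ, 0 < ε → ∃ n, (z:ℝ) < ((node S e rt (br n)).2.1:ℝ) ∧
        ((node S e rt (br n)).2.1:ℝ) - (z:ℝ) < ε) := by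
    by_contra hc
    push_neg at hc
    obtain ⟨⟨ε₁, hε₁, h1⟩, ⟨ε₂, hε₂, h2⟩⟩ := hc
    obtain ⟨n, hn⟩ := hbranch_close (min ε₁ ε₂) (lt_min hε₁ hε₂)
    have hXz : ((node S e rt (br n)).2.1:ℝ) ≠ (z:ℝ) := by
      intro h; exact hne (br n) (by exact_mod_cast h)
    rw [abs_sub_lt_iff] at hn
    rcases lt_or_gt_of_ne hXz with h | h
    · have := h1 n h
      have h3 : (z:ℝ) - ((node S e rt (br n)).2.1:ℝ) < ε₁ := lt_of_lt_of_le hn.2 (min_le_left _ _)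
      linarith
    · have := h2 n h
      have h3 : ((node S e rt (br n)).2.1:ℝ) - (z:ℝ) < ε₂ := lt_of_lt_of_le hn.1 (min_le_right _ _)
      linarith
  obtain ⟨k, hk⟩ := he z
  have hp2pos : ∀ m : ℕ, (0:ℝ) < (1/2)^m := fun m => pow_pos (by norm_num) m
  have hp2le : ∀ m : ℕ, (1/2:ℝ)^m ≤ 1 := fun m => pow_le_one₀ (by norm_num) (by norm_num)
  rcases hdich with hL | hR
  · -- left accumulation case
    have hgN : 0 < (z:ℝ) - (node S e rt (br (k+2))).1 := by
      have := (hzin (k+2)).1; linarith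
    have hstep : ∀ n, k+2 ≤ n →
        ((fun n => (z:ℝ) - (node S e rt (br n)).1) (n+1) =
          (fun n => (z:ℝ) - (node S e rt (br n)).1) n) ∨
        ((fun n => (z:ℝ) - (node S e rt (br n)).1) n * (1 - (1/2:ℝ)^(n+1)) ≤
          (fun n => (z:ℝ) - (node S e rt (br n)).1) (n+1)) := by
      intro n hn
      simp only
      rcases hupd n with ⟨hlt, hLe, -⟩ | ⟨-, -, hLe⟩
      · right
        obtain ⟨m, rfl⟩ : ∃ m, n = m + 1 := ⟨n - 1, by omega⟩
        by_cases hm : (node S e rt (br m)).2.1 < z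
        · -- impossible: x_{br (m+1)} was pushed above z
          exfalso
          have hb : br (m+1) = true :: br m := by rw [hbrS, decide_eq_true hm]
          obtain ⟨-, -, hROK⟩ := node_cons_true (e := e) hS hrt (br m)
          have h5 := hROK.2.2.2.2 k (by rw [hbrlen m]; omega)
            (by rw [hk]; exact_mod_cast hm) (by rw [hk]; exact (hzin m).2)
          rw [hk] at h5
          have hzR : (z:ℝ) < (node S e rt (br m)).2.2 := (hzin m).2
          have hlen : (br m).length = m := hbrlen m
          rw [hlen] at h5
          have hb' : ((node S e rt (br (m+1))).2.1:ℝ) = ((node S e rt (true :: br m)).2.1:ℝ) := by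
            rw [hb]
          have hlt' : ((node S e rt (br (m+1))).2.1:ℝ) < (z:ℝ) := by exact_mod_cast hlt
          rw [hb'] at hlt'
          nlinarith [hp2pos (m+2), hp2le (m+2)]
        · have hb : br (m+1) = false :: br m := by rw [hbrS, decide_eq_false hm]
          have hgt : (z:ℝ) < ((node S e rt (br m)).2.1:ℝ) := by
            have hle : z ≤ (node S e rt (br m)).2.1 := not_lt.1 hm
            have hne' : z ≠ (node S e rt (br m)).2.1 := fun h => hne (br m) h.symm
            exact_mod_cast lt_of_le_of_ne hle hne'
          obtain ⟨hL1, -, hLOK⟩ := node_cons_false (e := e) hS hrt (br m)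
          have h5 := hLOK.2.2.2.2 k (by rw [hbrlen m]; omega)
            (by rw [hk]; exact (hzin m).1) (by rw [hk]; exact hgt)
          rw [hk] at h5
          have hlen : (br m).length = m := hbrlen m
          rw [hlen] at h5
          -- L (m+1) = L m
          have hLm : (node S e rt (br (m+1))).1 = (node S e rt (br m)).1 := by rw [hb, hL1]
          -- X (m+1) as node (false :: br m)
          have hXe : ((node S e rt (br (m+1))).2.1:ℝ) = ((node S e rt (false :: br m)).2.1:ℝ) := by
            rw [hb]
          rw [hXe] at hLe
          rw [hLm, hLe]
          -- h5 : x_{false::br m} ≤ L m + (z - L m)*(1/2)^(m+2)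
          have hzL : (node S e rt (br m)).1 < (z:ℝ) := (hzin m).1
          nlinarith [hp2pos (m+2)]
      · left
        rw [hLe]
    have hmul := mul_lemma (fun n => (z:ℝ) - (node S e rt (br n)).1) (k+2) (by omega) hgN hstep
    obtain ⟨n, hn1, hn2⟩ := hL (((z:ℝ) - (node S e rt (br (k+2))).1)/2) (by linarith)
    have hLn1 : (node S e rt (br (n+1))).1 = ((node S e rt (br n)).2.1:ℝ) := by
      rcases hupd n with ⟨-, h1, -⟩ | ⟨hgt, -, -⟩
      · exact h1
      · exfalso; exact absurd hn1 (not_lt.2 (le_of_lt hgt))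
    rcases le_or_gt (k+2) (n+1) with h | h
    · have := hmul (n+1) h
      rw [hLn1] at this
      linarith
    · have hmono := hLmono (n+1) (k+2) (by omega)
      rw [hLn1] at hmono
      linarith
  · -- right accumulation case (mirror)
    have hgN : 0 < (node S e rt (br (k+2))).2.2 - (z:ℝ) := by
      have := (hzin (k+2)).2; linarith
    have hstep : ∀ n, k+2 ≤ n →
        ((fun n => (node S e rt (br n)).2.2 - (z:ℝ)) (n+1) =
          (fun n => (node S e rt (br n)).2.2 - (z:ℝ)) n) ∨
        ((fun n => (node S e rt (br n)).2.2 - (z:ℝ)) n * (1 - (1/2:ℝ)^(n+1)) ≤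
          (fun n => (node S e rt (br n)).2.2 - (z:ℝ)) (n+1)) := by
      intro n hn
      simp only
      rcases hupd n with ⟨-, -, hRe⟩ | ⟨hgt, hRe, -⟩
      · left
        rw [hRe]
      · right
        obtain ⟨m, rfl⟩ : ∃ m, n = m + 1 := ⟨n - 1, by omega⟩
        by_cases hm : (node S e rt (br m)).2.1 < z
        · have hb : br (m+1) = true :: br m := by rw [hbrS, decide_eq_true hm]
          obtain ⟨-, hR1, hROK⟩ := node_cons_true (e := e) hS hrt (br m)
          have h5 := hROK.2.2.2.2 k (by rw [hbrlen m]; omega)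
            (by rw [hk]; exact_mod_cast hm) (by rw [hk]; exact (hzin m).2)
          rw [hk] at h5
          have hlen : (br m).length = m := hbrlen m
          rw [hlen] at h5
          have hRm : (node S e rt (br (m+1))).2.2 = (node S e rt (br m)).2.2 := by rw [hb, hR1]
          have hXe : ((node S e rt (br (m+1))).2.1:ℝ) = ((node S e rt (true :: br m)).2.1:ℝ) := by
            rw [hb]
          rw [hXe] at hRe
          rw [hRm, hRe]
          have hzR : (z:ℝ) < (node S e rt (br m)).2.2 := (hzin m).2
          nlinarith [hp2pos (m+2)]
        · -- impossible: x_{br (m+1)} was pushed below z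
          exfalso
          have hb : br (m+1) = false :: br m := by rw [hbrS, decide_eq_false hm]
          have hgt' : (z:ℝ) < ((node S e rt (br m)).2.1:ℝ) := by
            have hle : z ≤ (node S e rt (br m)).2.1 := not_lt.1 hm
            have hne' : z ≠ (node S e rt (br m)).2.1 := fun h => hne (br m) h.symm
            exact_mod_cast lt_of_le_of_ne hle hne'
          obtain ⟨-, -, hLOK⟩ := node_cons_false (e := e) hS hrt (br m)
          have h5 := hLOK.2.2.2.2 k (by rw [hbrlen m]; omega)
            (by rw [hk]; exact (hzin m).1) (by rw [hk]; exact hgt')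
          rw [hk] at h5
          have hlen : (br m).length = m := hbrlen m
          rw [hlen] at h5
          have hb' : ((node S e rt (br (m+1))).2.1:ℝ) = ((node S e rt (false :: br m)).2.1:ℝ) := by
            rw [hb]
          have hgt2 : (z:ℝ) < ((node S e rt (br (m+1))).2.1:ℝ) := hgt
          rw [hb'] at hgt2
          have hzL : (node S e rt (br m)).1 < (z:ℝ) := (hzin m).1
          nlinarith [hp2pos (m+2), hp2le (m+2)]
    have hmul := mul_lemma (fun n => (node S e rt (br n)).2.2 - (z:ℝ)) (k+2) (by omega) hgN hstep
    obtain ⟨n, hn1, hn2⟩ := hR (((node S e rt (br (k+2))).2.2 - (z:ℝ))/2) (by linarith)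
    have hRn1 : (node S e rt (br (n+1))).2.2 = ((node S e rt (br n)).2.1:ℝ) := by
      rcases hupd n with ⟨hlt, -, -⟩ | ⟨-, h1, -⟩
      · exfalso
        have : ((node S e rt (br n)).2.1:ℝ) < (z:ℝ) := by exact_mod_cast hlt
        linarith
      · exact h1
    rcases le_or_gt (k+2) (n+1) with h | h
    · have := hmul (n+1) h
      rw [hRn1] at this
      linarith
    · have hmono := hRmono (n+1) (k+2) (by omega)
      rw [hRn1] at hmono
      linarith


lemma key (S : Set ℚ) (hne : S.Nonempty) (hS : TwoSidedCrowded S) :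
    ∃ P : Set ℚ, P ⊆ S ∧ P.Nonempty ∧ IsClosed P ∧ TwoSidedCrowded P := by
  obtain ⟨e, he⟩ := exists_surjective_nat ℚ
  obtain ⟨x0, hx0⟩ := hne
  obtain ⟨β, hβirr, hβlt, hβacc⟩ := exists_acc_below S hS e he x0 hx0
  obtain ⟨γ, hγirr, hγlt, hγacc⟩ := exists_acc_above S hS e he x0 hx0
  have hrt : Good S (β, x0, γ) := ⟨hx0, hβlt, hγlt, hβacc, hγacc⟩
  exact ⟨PP S e (β, x0, γ), PP_subset hS hrt, PP_nonempty,
    PP_closed hS hrt he hβirr hγirr, PP_crowded hS hrt⟩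

end S17

/-- Every nonempty `B ⊆ ℚ` containing a (nonempty) two-sided crowded subset has a
maximal two-sided crowded subset `C` (the union of all two-sided crowded subsets of
`B`), and `C` contains a (nonempty) two-sided perfect subset of ℚ. -/
theorem stmt17 (B : Set ℚ) (hne : B.Nonempty)
    (h : ∃ S : Set ℚ, S ⊆ B ∧ S.Nonempty ∧ TwoSidedCrowded S) :
    ∃ C : Set ℚ, C ⊆ B ∧ TwoSidedCrowded C ∧
      (∀ S : Set ℚ, S ⊆ B → TwoSidedCrowded S → S ⊆ C) ∧
      C = ⋃₀ {S : Set ℚ | S ⊆ B ∧ TwoSidedCrowded S} ∧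
      ∃ P : Set ℚ, P ⊆ C ∧ P.Nonempty ∧ IsClosed P ∧ TwoSidedCrowded P := by
  refine ⟨⋃₀ {S : Set ℚ | S ⊆ B ∧ TwoSidedCrowded S}, ?_, ?_, ?_, rfl, ?_⟩
  · rintro x ⟨T, ⟨hTB, -⟩, hxT⟩
    exact hTB hxT
  · rintro x ⟨T, ⟨hTB, hTc⟩, hxT⟩ ε hε
    obtain ⟨⟨y, hy, h1, h2⟩, ⟨w, hw, h3, h4⟩⟩ := hTc x hxT ε hε
    exact ⟨⟨y, ⟨T, ⟨hTB, hTc⟩, hy⟩, h1, h2⟩, ⟨w, ⟨T, ⟨hTB, hTc⟩, hw⟩, h3, h4⟩⟩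
  · intro T hTB hTc x hx
    exact ⟨T, ⟨hTB, hTc⟩, hx⟩
  · obtain ⟨S, hSB, hSne, hSc⟩ := h
    obtain ⟨P, hPS, hPne, hPcl, hPc⟩ := S17.key S hSne hSc
    exact ⟨P, fun x hx => ⟨P, ⟨subset_trans hPS hSB, hPc⟩, hx⟩, hPne, hPcl, hPc⟩
end

section
/- For every partition 𝒥 = {Jₙ : n < ω} of ω into consecutive finite intervals and every dominating (in the interval sense) family ⟨ℐ_α : α < ω₁⟩ of interval partitions, if for every partition 𝒥 there is α with (∀^∞ n)(∃k)(Jₙ ⊆ I_α^k ∪ I_α^{k+1}), then any ultrafilter u on ω satisfying (∀α < ω₁)(∃X ∈ u)(∀n)(|X ∩ I_α^n| ≤ 1) is a Q-point. -/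
open Filter

/-- An interval partition of ω, given by its strictly increasing sequence of
left endpoints starting at 0; the `n`-th interval is `[e n, e (n+1))`. -/
def IsIntervalPartition (e : ℕ → ℕ) : Prop := StrictMono e ∧ e 0 = 0

/-- Auxiliary recursively defined interval partition adapted to a "closure" function `g`. -/
def auxE (g : ℕ → ℕ) : ℕ → ℕ
  | 0 => 0
  | k + 1 => max (auxE g k + 1) ((Finset.range (auxE g k)).sup g)

lemma auxE_strictMono (g : ℕ → ℕ) : StrictMono (auxE g) :=
  strictMono_nat_of_lt_succ fun _ =>
    lt_of_lt_of_le (Nat.lt_succ_self _) (le_max_left _ _)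

lemma auxE_sup (g : ℕ → ℕ) {m k : ℕ} (h : m < auxE g k) : g m ≤ auxE g (k + 1) :=
  le_trans (Finset.le_sup (Finset.mem_range.mpr h)) (le_max_right _ _)

/-- If `⟨ℐ_α : α < ω₁⟩` is a dominating family of interval partitions such that
moreover every interval partition 𝒥 satisfies, for some α, that almost every
`Jₙ` is contained in a union of two consecutive intervals of `ℐ_α`, then every
ultrafilter `u` with `(∀ α)(∃ X ∈ u)(∀ n)(|X ∩ I_α^n| ≤ 1)` is a Q-point. -/
theorem stmt18
    (I : {o : Ordinal // o < (Cardinal.aleph 1).ord} → ℕ → ℕ)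
    (hI : ∀ α, IsIntervalPartition (I α))
    (hdom : ∀ J : ℕ → ℕ, IsIntervalPartition J → ∃ α,
      ∀ᶠ n in atTop, ∃ k, Set.Ico (J k) (J (k + 1)) ⊆ Set.Ico (I α n) (I α (n + 1)))
    (htwo : ∀ J : ℕ → ℕ, IsIntervalPartition J → ∃ α,
      ∀ᶠ n in atTop, ∃ k, Set.Ico (J n) (J (n + 1)) ⊆
        Set.Ico (I α k) (I α (k + 1)) ∪ Set.Ico (I α (k + 1)) (I α (k + 2)))
    (u : Ultrafilter ℕ)
    (hu : ∀ α, ∃ X ∈ u, ∀ n, Set.Subsingleton (X ∩ Set.Ico (I α n) (I α (n + 1)))) :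
    ∀ p : ℕ → Set ℕ, (∀ n, (p n).Finite) →
      (∀ n m, n ≠ m → Disjoint (p n) (p m)) → (⋃ n, p n) = Set.univ →
      ∃ X ∈ u, ∀ n, Set.Subsingleton (X ∩ p n) := by
  classical
  intro p hfin hdisj hcov
  -- dispose of the principal case
  by_cases hpure : ∃ a : ℕ, u = (pure a : Ultrafilter ℕ)
  · obtain ⟨a, rfl⟩ := hpure
    exact ⟨{a}, Ultrafilter.mem_pure.mpr rfl,
      fun n => Set.subsingleton_singleton.anti Set.inter_subset_left⟩
  have hco : ∀ F : Set ℕ, F.Finite → Fᶜ ∈ u := by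
    intro F hF
    refine Ultrafilter.compl_mem_iff_notMem.mpr fun hFu => hpure ?_
    obtain ⟨a, _, ha⟩ := Ultrafilter.eq_pure_of_finite_mem hF hFu
    exact ⟨a, ha⟩
  -- index of each point in the partition p
  have hmem : ∀ m : ℕ, ∃ n, m ∈ p n := fun m =>
    Set.mem_iUnion.mp (hcov ▸ Set.mem_univ m)
  choose idx hidx using hmem
  have hidx_uniq : ∀ n m, m ∈ p n → n = idx m := by
    intro n m hm
    by_contra hne
    exact Set.disjoint_left.mp (hdisj n (idx m) hne) hm (hidx m)
  -- closure function and adapted interval partition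
  set g : ℕ → ℕ := fun m => (hfin (idx m)).toFinset.sup id + 1 with hg
  have hgmem : ∀ m x : ℕ, x ∈ p (idx m) → x < g m := by
    intro m x hx
    have hle : x ≤ (hfin (idx m)).toFinset.sup id :=
      Finset.le_sup (f := id) ((hfin (idx m)).mem_toFinset.mpr hx)
    show x < (hfin (idx m)).toFinset.sup id + 1
    omega
  set e : ℕ → ℕ := auxE g with he
  have hemono : StrictMono e := auxE_strictMono g
  obtain ⟨α, hα⟩ := htwo e ⟨hemono, rfl⟩
  obtain ⟨N, hN⟩ := eventually_atTop.mp hα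
  obtain ⟨X, hXu, hX⟩ := hu α
  have hImono : StrictMono (I α) := (hI α).1
  have hI0 : I α 0 = 0 := (hI α).2
  -- index of each point with respect to the interval partition I α
  set i : ℕ → ℕ := fun x => Nat.findGreatest (fun j => I α j ≤ x) x with hi
  have hi1 : ∀ x, I α (i x) ≤ x := fun x =>
    Nat.findGreatest_spec (P := fun j => I α j ≤ x) (Nat.zero_le x) (by show I α 0 ≤ x; rw [hI0]; exact Nat.zero_le x)
  have hi2 : ∀ x, x < I α (i x + 1) := by
    intro x
    by_contra h
    push_neg at h
    exact Nat.findGreatest_is_greatest (Nat.lt_succ_self _)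
      (le_trans hImono.le_apply h) h
  -- one of the four residue classes of X belongs to u
  have hXsub : X ⊆ (X ∩ {x | i x % 4 = 0}) ∪ (X ∩ {x | i x % 4 = 1}) ∪
      (X ∩ {x | i x % 4 = 2}) ∪ (X ∩ {x | i x % 4 = 3}) := by
    intro x hx
    have h4 : i x % 4 = 0 ∨ i x % 4 = 1 ∨ i x % 4 = 2 ∨ i x % 4 = 3 := by omega
    rcases h4 with h | h | h | h
    · exact Or.inl (Or.inl (Or.inl ⟨hx, h⟩))
    · exact Or.inl (Or.inl (Or.inr ⟨hx, h⟩))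
    · exact Or.inl (Or.inr ⟨hx, h⟩)
    · exact Or.inr ⟨hx, h⟩
  have hXun : (X ∩ {x | i x % 4 = 0}) ∪ (X ∩ {x | i x % 4 = 1}) ∪
      (X ∩ {x | i x % 4 = 2}) ∪ (X ∩ {x | i x % 4 = 3}) ∈ u :=
    Filter.mem_of_superset hXu hXsub
  have hj : ∃ j, (X ∩ {x | i x % 4 = j}) ∈ u := by
    rcases Ultrafilter.union_mem_iff.mp hXun with h | h
    · rcases Ultrafilter.union_mem_iff.mp h with h' | h'
      · rcases Ultrafilter.union_mem_iff.mp h' with h'' | h''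
        · exact ⟨0, h''⟩
        · exact ⟨1, h''⟩
      · exact ⟨2, h'⟩
    · exact ⟨3, h⟩
  obtain ⟨j, hj⟩ := hj
  -- the finite "bad" part
  set F : Set ℕ := ⋃ m ∈ Finset.range (e N), p (idx m) with hF
  have hFfin : F.Finite := Set.Finite.biUnion (Finset.finite_toSet _) (fun m _ => hfin _)
  refine ⟨(X ∩ {x | i x % 4 = j}) ∩ Fᶜ, Filter.inter_mem hj (hco F hFfin), fun n => ?_⟩
  by_cases hne : (p n).Nonempty
  swap
  · rw [Set.not_nonempty_iff_eq_empty] at hne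
    simp [hne]
  set m0 := sInf (p n) with hm0
  have hm0mem : m0 ∈ p n := Nat.sInf_mem hne
  by_cases hlt : m0 < e N
  · -- bad piece: contained in F
    have hpF : p n ⊆ F := by
      intro x hx
      refine Set.mem_biUnion (Finset.mem_range.mpr hlt) ?_
      rw [← hidx_uniq n m0 hm0mem]
      exact hx
    intro x hx y hy
    exact absurd (hpF hx.2) hx.1.2
  push_neg at hlt
  -- find the interval of e containing min of p n
  set k := Nat.findGreatest (fun k => e k ≤ m0) m0 with hk
  have hk1 : e k ≤ m0 :=
    Nat.findGreatest_spec (P := fun k => e k ≤ m0) (Nat.zero_le m0) (Nat.zero_le m0)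
  have hk2 : m0 < e (k + 1) := by
    by_contra h
    push_neg at h
    exact Nat.findGreatest_is_greatest (Nat.lt_succ_self _)
      (le_trans hemono.le_apply h) h
  have hkN : N ≤ k := by
    have := hemono.lt_iff_lt.mp (lt_of_le_of_lt hlt hk2)
    omega
  have hsub : p n ⊆ Set.Ico (e k) (e (k + 2)) := by
    intro x hx
    refine ⟨le_trans hk1 (Nat.sInf_le hx), ?_⟩
    have hxlt : x < g m0 := hgmem m0 x (by rwa [← hidx_uniq n m0 hm0mem])
    have hge : g m0 ≤ e (k + 2) := auxE_sup g hk2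
    omega
  obtain ⟨a, ha⟩ := hN k hkN
  obtain ⟨b, hb⟩ := hN (k + 1) (by omega)
  rw [Set.Ico_union_Ico_eq_Ico (hImono.monotone (by omega)) (hImono.monotone (by omega))] at ha hb
  have hek : e k ∈ Set.Ico (I α a) (I α (a + 2)) :=
    ha ⟨le_refl _, hemono (Nat.lt_succ_self k)⟩
  have hek1 : e (k + 1) ∈ Set.Ico (I α b) (I α (b + 2)) :=
    hb ⟨le_refl _, hemono (Nat.lt_succ_self _)⟩
  have hek1' : e (k + 1) ≤ I α (a + 2) := by
    have hlt' : e k < e (k + 1) := hemono (Nat.lt_succ_self k)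
    have h1 : e (k + 1) - 1 ∈ Set.Ico (e k) (e (k + 1)) := ⟨by omega, by omega⟩
    have := (ha h1).2
    omega
  have hba : b ≤ a + 2 := by
    have : I α b ≤ I α (a + 2) := le_trans hek1.1 hek1'
    exact hImono.le_iff_le.mp this
  have hab : a ≤ b + 1 := by
    have : I α a < I α (b + 2) :=
      lt_of_le_of_lt hek.1 (lt_trans (hemono (Nat.lt_succ_self k)) hek1.2)
    have := hImono.lt_iff_lt.mp this
    omega
  set c := min a b with hc
  have hsub2 : p n ⊆ Set.Ico (I α c) (I α (c + 4)) := by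
    intro x hx
    rcases hsub hx with ⟨hx1, hx2⟩
    by_cases hxk : x < e (k + 1)
    · rcases ha ⟨hx1, hxk⟩ with ⟨h1, h2⟩
      exact ⟨le_trans (hImono.monotone (min_le_left a b)) h1,
        lt_of_lt_of_le h2 (hImono.monotone (by omega))⟩
    · push_neg at hxk
      rcases hb ⟨hxk, hx2⟩ with ⟨h1, h2⟩
      exact ⟨le_trans (hImono.monotone (min_le_right a b)) h1,
        lt_of_lt_of_le h2 (hImono.monotone (by omega))⟩
  -- indices of points of p n w.r.t. I α lie in [c, c+3]
  have hibound : ∀ x ∈ p n, c ≤ i x ∧ i x ≤ c + 3 := by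
    intro x hx
    rcases hsub2 hx with ⟨h1, h2⟩
    constructor
    · have h3 : I α c < I α (i x + 1) := lt_of_le_of_lt h1 (hi2 x)
      have := hImono.lt_iff_lt.mp h3
      omega
    · have h3 : I α (i x) < I α (c + 4) := lt_of_le_of_lt (hi1 x) h2
      have := hImono.lt_iff_lt.mp h3
      omega
  intro x hx y hy
  obtain ⟨⟨⟨hxX, hxj⟩, _⟩, hxp⟩ := hx
  obtain ⟨⟨⟨hyX, hyj⟩, _⟩, hyp⟩ := hy
  have hxi := hibound x hxp
  have hyi := hibound y hyp
  have hxj' : i x % 4 = j := hxj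
  have hyj' : i y % 4 = j := hyj
  have hixy : i x = i y := by omega
  refine hX (i x) ⟨hxX, hi1 x, hi2 x⟩ ⟨hyX, ?_, ?_⟩
  · rw [hixy]; exact hi1 y
  · rw [hixy]; exact hi2 y
end
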